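/- arXiv:1508.02273 — 6 statements merged into one kernel-verified Lean document; each statement's English description precedes it below -/
import Mathlib

section
/- The generating function T₂(a,u) for bi-coloured Dyck paths (each step coloured red or blue), counted by half-length (conjugate to u) and number of multicoloured peaks (an up-step followed by a down-step of the opposite colour, conjugate to a), satisfies the quadratic equation T₂ = 4u(T₂ - 1)T₂ + u(2a+2)T₂ + 1. -/
open scoped Classical

/-- A step of a bi-coloured Dyck path: the first component records whether it is an
up-step, the second component records the colour (red/blue). -/
abbrev BiStep := Bool × Bool

/-- The height increment of a step. -/
def stepHt (s : BiStep) : ℤ := if s.1 then 1 else -1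

/-- The final height of a path. -/
def pathHt (l : List BiStep) : ℤ := (l.map stepHt).sum

/-- A bi-coloured Dyck path: all prefix heights are nonnegative and the final height is 0. -/
def IsBiDyck (l : List BiStep) : Prop :=
  (∀ m : ℕ, 0 ≤ pathHt (l.take m)) ∧ pathHt l = 0

/-- The number of multicoloured peaks: an up-step immediately followed by a down-step of
the opposite colour. -/
def mcPeaks (l : List BiStep) : ℕ :=
  ((l.zip l.tail).filter fun p => decide (p.1.1 = true ∧ p.2.1 = false ∧ p.1.2 ≠ p.2.2)).length

/-! ### pathHt basics -/

@[simp] lemma pathHt_nil : pathHt ([] : List BiStep) = 0 := rfl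

@[simp] lemma pathHt_cons (x : BiStep) (l : List BiStep) :
    pathHt (x :: l) = stepHt x + pathHt l := by
  simp [pathHt]

@[simp] lemma pathHt_append (l₁ l₂ : List BiStep) :
    pathHt (l₁ ++ l₂) = pathHt l₁ + pathHt l₂ := by
  simp [pathHt]

lemma pathHt_take_append (l₁ l₂ : List BiStep) (m : ℕ) :
    pathHt ((l₁ ++ l₂).take m) = pathHt (l₁.take m) + pathHt (l₂.take (m - l₁.length)) := by
  rw [List.take_append, pathHt_append]

lemma pathHt_take_of_le (l : List BiStep) {m : ℕ} (h : l.length ≤ m) :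
    pathHt (l.take m) = pathHt l := by
  rw [List.take_of_length_le h]

lemma even_length_of_pathHt_zero {l : List BiStep} (h : pathHt l = 0) :
    ∃ i, l.length = 2 * i := by
  have key : ∀ l : List BiStep, Even (pathHt l + l.length) := by
    intro l
    induction l with
    | nil => simp
    | cons x l ih =>
      have : pathHt (x :: l) + (x :: l).length
          = (pathHt l + l.length) + (stepHt x + 1) := by
        simp [pathHt_cons]; ring
      rw [this]
      refine ih.add ?_
      rcases x with ⟨b, c⟩
      cases b <;> simp [stepHt]
  have h2 := key l
  rw [h, zero_add] at h2
  have : Even l.length := by exact_mod_cast (Int.even_coe_nat _).mp h2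
  rcases this with ⟨i, hi⟩
  exact ⟨i, by omega⟩

/-! ### mcPeaks basics -/

def pk (x y : BiStep) : Bool := decide (x.1 = true ∧ y.1 = false ∧ x.2 ≠ y.2)

@[simp] lemma mcPeaks_nil : mcPeaks [] = 0 := rfl

@[simp] lemma mcPeaks_singleton (x : BiStep) : mcPeaks [x] = 0 := rfl

lemma mcPeaks_cons_cons (x y : BiStep) (l : List BiStep) :
    mcPeaks (x :: y :: l) = (if pk x y then 1 else 0) + mcPeaks (y :: l) := by
  simp only [mcPeaks, pk, List.zip_cons_cons, List.tail_cons, List.filter_cons]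
  split <;> simp_all [Nat.add_comm]

lemma mcPeaks_append (l : List BiStep) (x : BiStep) (m : List BiStep) :
    mcPeaks (l ++ x :: m) = mcPeaks (l ++ [x]) + mcPeaks (x :: m) := by
  induction l with
  | nil => simp
  | cons a l ih =>
    cases l with
    | nil => simp [mcPeaks_cons_cons]
    | cons b l' =>
      have h1 : (a :: b :: l') ++ x :: m = a :: b :: (l' ++ x :: m) := by simp
      have h2 : (a :: b :: l') ++ [x] = a :: b :: (l' ++ [x]) := by simp
      rw [h1, h2, mcPeaks_cons_cons, mcPeaks_cons_cons]
      have h3 : (b :: l') ++ x :: m = b :: (l' ++ x :: m) := by simp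
      have h4 : (b :: l') ++ [x] = b :: (l' ++ [x]) := by simp
      rw [← h3, ← h4, ih]
      ring

lemma mcPeaks_cons_of_down {x : BiStep} (hx : x.1 = false) (l : List BiStep) :
    mcPeaks (x :: l) = mcPeaks l := by
  cases l with
  | nil => simp
  | cons y l => rw [mcPeaks_cons_cons]; simp [pk, hx]

lemma mcPeaks_concat_of_down {l : List BiStep} (hl : l ≠ [])
    (hlast : (l.getLast hl).1 = false) (x : BiStep) :
    mcPeaks (l ++ [x]) = mcPeaks l := by
  rcases List.eq_nil_or_concat l with h | ⟨L, b, h⟩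
  · exact absurd h hl
  · subst h
    have hb : b.1 = false := by
      simpa [List.concat_eq_append] using hlast
    rw [List.concat_eq_append, List.append_assoc]
    have : L ++ ([b] ++ [x]) = L ++ b :: [x] := by simp
    rw [this, mcPeaks_append L b [x]]
    simp [mcPeaks_cons_cons, pk, hb, List.concat_eq_append]

/-! ### Dyck structure -/

lemma IsBiDyck.head_up {x : BiStep} {l : List BiStep} (h : IsBiDyck (x :: l)) :
    x.1 = true := by
  have h1 := h.1 1
  rw [List.take_succ_cons, List.take_zero, pathHt_cons, pathHt_nil, add_zero] at h1
  by_contra hx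
  simp only [Bool.not_eq_true] at hx
  simp [stepHt, hx] at h1

lemma isBiDyck_compose (c₁ c₂ : Bool) {P Q : List BiStep}
    (hP : IsBiDyck P) (hQ : IsBiDyck Q) :
    IsBiDyck (((true, c₁) :: P) ++ ((false, c₂) :: Q)) := by
  constructor
  · intro m
    rw [pathHt_take_append]
    simp only [List.length_cons]
    have hu : stepHt ((true : Bool), c₁) = 1 := rfl
    have hd : stepHt ((false : Bool), c₂) = -1 := rfl
    rcases le_or_gt m (P.length + 1) with hm | hm
    · have hz : m - (P.length + 1) = 0 := by omega
      rw [hz, List.take_zero, pathHt_nil, add_zero]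
      cases m with
      | zero => simp
      | succ m' =>
        rw [List.take_succ_cons, pathHt_cons]
        have := hP.1 m'
        omega
    · obtain ⟨m', rfl⟩ : ∃ m', m = m' + 1 := ⟨m - 1, by omega⟩
      rw [List.take_succ_cons, pathHt_cons, pathHt_take_of_le P (by omega), hP.2]
      have hm2 : m' + 1 - (P.length + 1) = (m' - (P.length + 1)) + 1 := by omega
      rw [hm2, List.take_succ_cons, pathHt_cons]
      have := hQ.1 (m' - (P.length + 1))
      omega
  · rw [pathHt_append, pathHt_cons, pathHt_cons, hP.2, hQ.2]
    simp [stepHt]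

lemma isBiDyck_decomp {l : List BiStep} (h : IsBiDyck l) (hne : l ≠ []) :
    ∃ (c₁ c₂ : Bool) (P Q : List BiStep),
      l = ((true, c₁) :: P) ++ ((false, c₂) :: Q) ∧ IsBiDyck P ∧ IsBiDyck Q := by
  rcases l with _ | ⟨s, rest⟩
  · exact absurd rfl hne
  have hs : s.1 = true := h.head_up
  have hrest : pathHt rest = -1 := by
    have := h.2
    rw [pathHt_cons] at this
    simp [stepHt, hs] at this
    omega
  -- prefix bound: every prefix of rest has height ≥ -1
  have hpre : ∀ m : ℕ, -1 ≤ pathHt (rest.take m) := by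
    intro m
    have := h.1 (m + 1)
    rw [List.take_succ_cons, pathHt_cons] at this
    simp only [stepHt, hs, if_pos rfl] at this
    omega
  have hex : ∃ k, pathHt (rest.take k) = -1 :=
    ⟨rest.length, by rwa [List.take_of_length_le le_rfl]⟩
  set k := Nat.find hex with hkdef
  have hkspec : pathHt (rest.take k) = -1 := Nat.find_spec hex
  have hkmin : ∀ m < k, pathHt (rest.take m) ≠ -1 := fun m hm => Nat.find_min hex hm
  have hk0 : k ≠ 0 := by
    intro h0
    rw [h0, List.take_zero, pathHt_nil] at hkspec
    omega
  clear hkdef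
  clear_value k
  obtain ⟨k', rfl⟩ : ∃ k', k = k' + 1 := ⟨k - 1, by omega⟩
  have hklen : k' + 1 ≤ rest.length := by
    by_contra hcon
    have : pathHt (rest.take rest.length) = -1 := by
      rwa [List.take_of_length_le le_rfl]
    have := hkmin rest.length (by omega)
    exact this ‹_›
  have hklt : k' < rest.length := hklen
  set P := rest.take k' with hPdef
  set d := rest[k'] with hddef
  set Q := rest.drop (k' + 1) with hQdef
  have htake : rest.take (k' + 1) = P ++ [d] := by
    rw [List.take_succ, hPdef]
    congr 1
    rw [List.getElem?_eq_getElem hklt]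
    rfl
  have hrestEq : rest = P ++ d :: Q := by
    conv_lhs => rw [← List.take_append_drop (k' + 1) rest]
    rw [htake, hQdef, List.append_assoc]
    rfl
  -- heights of prefixes of P are ≥ 0
  have hPpre : ∀ m : ℕ, 0 ≤ pathHt (P.take m) := by
    intro m
    rw [hPdef, List.take_take]
    rcases le_or_gt m k' with hm | hm
    · rw [min_eq_left hm]
      have h1 := hpre m
      have h2 := hkmin m (by omega)
      omega
    · rw [min_eq_right (by omega)]
      have h1 := hpre k'
      have h2 := hkmin k' (by omega)
      omega
  have hPht : pathHt P + stepHt d = -1 := by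
    have := hkspec
    rw [htake, pathHt_append, pathHt_cons, pathHt_nil] at this
    omega
  have hP0 : pathHt P = 0 := by
    have h1 := hPpre P.length
    rw [List.take_of_length_le le_rfl] at h1
    have : stepHt d = 1 ∨ stepHt d = -1 := by
      rcases d with ⟨b, c⟩; cases b <;> simp [stepHt]
    omega
  have hd : d.1 = false := by
    have : stepHt d = -1 := by omega
    rcases d with ⟨b, c⟩
    cases b
    · rfl
    · simp [stepHt] at this
  have hQ0 : pathHt Q = 0 := by
    have := hrest
    rw [hrestEq, pathHt_append, pathHt_cons] at this
    have hsd : stepHt d = -1 := by omega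
    omega
  have hQpre : ∀ m : ℕ, 0 ≤ pathHt (Q.take m) := by
    intro m
    have h1 := hpre (k' + 1 + m)
    rw [List.take_add, pathHt_append, hkspec] at h1
    rw [hQdef]
    omega
  refine ⟨s.2, d.2, P, Q, ?_, ⟨hPpre, hP0⟩, ⟨hQpre, hQ0⟩⟩
  have hsEq : s = (true, s.2) := by
    rcases s with ⟨b, c⟩; cases b
    · simp at hs
    · rfl
  have hdEq : d = (false, d.2) := by
    rcases d with ⟨b, c⟩; cases b
    · rfl
    · simp at hd
  rw [← hsEq, ← hdEq]
  rw [List.cons_append]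
  rw [← hrestEq]

lemma compose_inj_aux {P P' Q Q' : List BiStep} {c₂ c₂' : Bool}
    (hP : IsBiDyck P) (hP' : IsBiDyck P')
    (hE : P ++ ((false, c₂) :: Q) = P' ++ ((false, c₂') :: Q'))
    (hlen : P.length < P'.length) : False := by
  have htake := congrArg (List.take (P.length + 1)) hE
  rw [List.take_append, List.take_append] at htake
  rw [List.take_of_length_le (by omega)] at htake
  have h1 : P.length + 1 - P.length = 1 := by omega
  rw [h1] at htake
  have h2 : P.length + 1 - P'.length = 0 := by omega
  rw [h2, List.take_zero, List.append_nil] at htake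
  have hht := congrArg pathHt htake
  rw [pathHt_append, hP.2] at hht
  simp only [List.take_succ_cons, List.take_zero, pathHt_cons, pathHt_nil] at hht
  have h3 : 0 ≤ pathHt (P'.take (P.length + 1)) := hP'.1 _
  rw [← hht] at h3
  simp [stepHt] at h3

lemma compose_inj {c₁ c₂ c₁' c₂' : Bool} {P Q P' Q' : List BiStep}
    (hP : IsBiDyck P) (hP' : IsBiDyck P')
    (h : ((true, c₁) :: P) ++ ((false, c₂) :: Q)
        = ((true, c₁') :: P') ++ ((false, c₂') :: Q')) :
    c₁ = c₁' ∧ P = P' ∧ c₂ = c₂' ∧ Q = Q' := by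
  rw [List.cons_append, List.cons_append, List.cons.injEq] at h
  obtain ⟨hc, hE⟩ := h
  have hc₁ : c₁ = c₁' := by simpa using hc
  have hlen : P.length = P'.length := by
    by_contra hne
    rcases Nat.lt_or_ge P.length P'.length with hlt | hge
    · exact compose_inj_aux hP hP' hE hlt
    · exact compose_inj_aux hP' hP hE.symm (by omega)
  obtain ⟨hPP, hrest⟩ := List.append_inj hE hlen
  subst hPP
  rw [List.cons.injEq] at hrest
  obtain ⟨hd, hQQ⟩ := hrest
  exact ⟨hc₁, rfl, by simpa using hd, hQQ⟩

lemma IsBiDyck.getLast_down {l : List BiStep} (h : IsBiDyck l) (hne : l ≠ []) :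
    (l.getLast hne).1 = false := by
  rcases List.eq_nil_or_concat l with rfl | ⟨L, b, rfl⟩
  · exact absurd rfl hne
  have hlast : (L.concat b).getLast hne = b := by
    simp [List.concat_eq_append]
  rw [hlast]
  have h1 : pathHt L + stepHt b = 0 := by
    have := h.2
    rwa [List.concat_eq_append, pathHt_append, pathHt_cons, pathHt_nil, add_zero] at this
  have h2 : 0 ≤ pathHt L := by
    have := h.1 L.length
    rwa [List.concat_eq_append, List.take_left] at this
  rcases b with ⟨bb, c⟩
  cases bb
  · rfl
  · simp [stepHt] at h1; omega

lemma mcPeaks_compose (c₁ c₂ : Bool) {P Q : List BiStep}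
    (hP : IsBiDyck P) (hQ : IsBiDyck Q) :
    mcPeaks (((true, c₁) :: P) ++ ((false, c₂) :: Q)) =
      mcPeaks P + mcPeaks Q + (if P = [] ∧ c₁ ≠ c₂ then 1 else 0) := by
  cases P with
  | nil =>
    simp only [List.nil_append, mcPeaks_nil, zero_add]
    rw [List.cons_append, List.nil_append, mcPeaks_cons_cons,
      mcPeaks_cons_of_down rfl]
    have : pk (true, c₁) (false, c₂) = decide (c₁ ≠ c₂) := by
      cases c₁ <;> cases c₂ <;> simp [pk]
    rw [this]
    cases c₁ <;> cases c₂ <;> simp <;> ring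
  | cons p P' =>
    have hup : p.1 = true := hP.head_up
    have hpk : pk (true, c₁) p = false := by
      simp [pk, hup]
    rw [List.cons_append, List.cons_append, mcPeaks_cons_cons, hpk, if_neg (by simp)]
    have hne : (p :: P') ≠ [] := by simp
    rw [show p :: (P' ++ (false, c₂) :: Q) = (p :: P') ++ (false, c₂) :: Q by simp,
      mcPeaks_append, mcPeaks_concat_of_down hne (hP.getLast_down hne),
      mcPeaks_cons_of_down (x := ((false : Bool), c₂)) rfl]
    simp

/-! ### Counting -/

open Polynomial in
noncomputable def dy (n : ℕ) : Finset (List BiStep) :=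
  Finset.filter (fun l => IsBiDyck l)
    ((Finset.univ : Finset (Fin n → BiStep)).image List.ofFn)

noncomputable def tD (n : ℕ) : Polynomial ℤ :=
  ∑ l ∈ dy n, (Polynomial.X : Polynomial ℤ) ^ mcPeaks l

lemma mem_dy {n : ℕ} {l : List BiStep} :
    l ∈ dy n ↔ l.length = n ∧ IsBiDyck l := by
  rw [dy, Finset.mem_filter, Finset.mem_image]
  constructor
  · rintro ⟨⟨f, -, rfl⟩, h2⟩
    exact ⟨List.length_ofFn, h2⟩
  · rintro ⟨h1, h2⟩
    refine ⟨⟨fun i => l.get (Fin.cast h1.symm i), Finset.mem_univ _, ?_⟩, h2⟩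
    apply List.ext_getElem
    · simp [h1]
    · intro i hi1 hi2
      simp [List.getElem_ofFn]

lemma dy_zero : dy 0 = {[]} := by
  ext l
  rw [mem_dy, Finset.mem_singleton]
  constructor
  · rintro ⟨h1, -⟩
    exact List.length_eq_zero_iff.mp h1
  · rintro rfl
    exact ⟨rfl, fun m => by simp, rfl⟩

lemma tD_zero : tD 0 = 1 := by
  rw [tD, dy_zero, Finset.sum_singleton, mcPeaks_nil, pow_zero]

lemma tD_eq_coeff (n : ℕ) :
    (∑ f : Fin n → BiStep,
      if IsBiDyck (List.ofFn f) then (Polynomial.X : Polynomial ℤ) ^ mcPeaks (List.ofFn f) else 0)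
    = tD n := by
  rw [tD, dy, Finset.sum_filter, Finset.sum_image]
  intro f _ g _ h
  exact List.ofFn_inj.mp h

open Polynomial in
lemma innerSum (i j : ℕ) :
    (∑ c₁ : Bool, ∑ c₂ : Bool, ∑ P ∈ dy (2 * i), ∑ Q ∈ dy (2 * j),
      (X : Polynomial ℤ) ^ mcPeaks (((true, c₁) :: P) ++ ((false, c₂) :: Q)))
    = (if i = 0 then 2 * X + 2 else 4) * (tD (2 * i) * tD (2 * j)) := by
  have key : ∀ (c₁ c₂ : Bool), ∀ P ∈ dy (2 * i), ∀ Q ∈ dy (2 * j),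
      (X : Polynomial ℤ) ^ mcPeaks (((true, c₁) :: P) ++ ((false, c₂) :: Q))
        = X ^ mcPeaks P * X ^ mcPeaks Q * (if P = [] ∧ c₁ ≠ c₂ then X else 1) := by
    intro c₁ c₂ P hP Q hQ
    rw [mcPeaks_compose c₁ c₂ (mem_dy.mp hP).2 (mem_dy.mp hQ).2, pow_add, pow_add]
    congr 1
    split <;> simp
  rw [Finset.sum_congr rfl fun c₁ _ => Finset.sum_congr rfl fun c₂ _ =>
    Finset.sum_congr rfl fun P hP => Finset.sum_congr rfl fun Q hQ => key c₁ c₂ P hP Q hQ]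
  rcases Nat.eq_zero_or_pos i with rfl | hi
  · rw [if_pos rfl]
    simp only [Nat.mul_zero, dy_zero, Finset.sum_singleton, mcPeaks_nil, pow_zero, one_mul,
      true_and]
    rw [Fintype.sum_bool, Fintype.sum_bool, Fintype.sum_bool]
    simp only [show ((true : Bool) ≠ true) = False by simp,
      show ((true : Bool) ≠ false) = True by simp,
      show ((false : Bool) ≠ true) = True by simp,
      show ((false : Bool) ≠ false) = False by simp, if_true, if_false, mul_one,
      ← Finset.sum_mul]
    have ht : (∑ x ∈ dy (2 * j), (X : Polynomial ℤ) ^ mcPeaks x) = tD (2 * j) := rfl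
    rw [ht, tD_zero]
    ring
  · rw [if_neg (by omega)]
    have hkill : ∀ c₁ c₂ : Bool, ∀ P ∈ dy (2 * i), ∀ Q ∈ dy (2 * j),
        (X : Polynomial ℤ) ^ mcPeaks P * X ^ mcPeaks Q * (if P = [] ∧ c₁ ≠ c₂ then X else 1)
          = X ^ mcPeaks P * X ^ mcPeaks Q := by
      intro c₁ c₂ P hP Q hQ
      have hne : P ≠ [] := by
        intro h
        have := (mem_dy.mp hP).1
        rw [h] at this
        simp at this
        omega
      rw [if_neg (by tauto), mul_one]
    rw [Finset.sum_congr rfl fun c₁ _ => Finset.sum_congr rfl fun c₂ _ =>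
      Finset.sum_congr rfl fun P hP => Finset.sum_congr rfl fun Q hQ => hkill c₁ c₂ P hP Q hQ]
    have hprod : (∑ P ∈ dy (2 * i), ∑ Q ∈ dy (2 * j),
        (X : Polynomial ℤ) ^ mcPeaks P * X ^ mcPeaks Q) = tD (2 * i) * tD (2 * j) := by
      rw [← Finset.sum_mul_sum]
      rfl
    simp only [Fintype.sum_bool, hprod]
    ring

abbrev Dat := Σ _ : ℕ × ℕ, Bool × Bool × List BiStep × List BiStep

def build (x : Dat) : List BiStep :=
  ((true, x.2.1) :: x.2.2.2.1) ++ ((false, x.2.2.1) :: x.2.2.2.2)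

open Polynomial in
lemma tD_rec (n : ℕ) :
    tD (2 * (n + 1)) = ∑ p ∈ Finset.HasAntidiagonal.antidiagonal n,
      (if p.1 = 0 then 2 * X + 2 else 4) * (tD (2 * p.1) * tD (2 * p.2)) := by
  classical
  set S : Finset Dat := (Finset.HasAntidiagonal.antidiagonal n).sigma
    (fun p => (Finset.univ : Finset Bool) ×ˢ (Finset.univ : Finset Bool) ×ˢ
      dy (2 * p.1) ×ˢ dy (2 * p.2)) with hS
  have hbij : (∑ x ∈ S, (X : Polynomial ℤ) ^ mcPeaks (build x)) = tD (2 * (n + 1)) := by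
    apply Finset.sum_bij (fun x _ => build x)
    · rintro ⟨⟨i, j⟩, c₁, c₂, P, Q⟩ ha
      simp only [hS, Finset.mem_sigma, Finset.mem_product, Finset.mem_univ, true_and] at ha
      obtain ⟨hij, hP, hQ⟩ := ha
      rw [Finset.HasAntidiagonal.mem_antidiagonal] at hij
      rw [mem_dy]
      constructor
      · have h1 := (mem_dy.mp hP).1
        have h2 := (mem_dy.mp hQ).1
        simp only [build, List.length_append, List.length_cons]
        omega
      · exact isBiDyck_compose c₁ c₂ (mem_dy.mp hP).2 (mem_dy.mp hQ).2
    · rintro ⟨⟨i, j⟩, c₁, c₂, P, Q⟩ ha ⟨⟨i', j'⟩, c₁', c₂', P', Q'⟩ ha' heq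
      simp only [hS, Finset.mem_sigma, Finset.mem_product, Finset.mem_univ, true_and] at ha ha'
      obtain ⟨hij, hP, hQ⟩ := ha
      obtain ⟨hij', hP', hQ'⟩ := ha'
      simp only [build] at heq
      obtain ⟨hc₁, hPP, hc₂, hQQ⟩ := compose_inj (mem_dy.mp hP).2 (mem_dy.mp hP').2 heq
      have hi : i = i' := by
        have h1 := (mem_dy.mp hP).1
        have h2 := (mem_dy.mp hP').1
        rw [← hPP] at h2
        omega
      have hj : j = j' := by
        rw [Finset.HasAntidiagonal.mem_antidiagonal] at hij hij'
        omega
      subst hi hj hc₁ hPP hc₂ hQQ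
      rfl
    · intro b hb
      have hb' := mem_dy.mp hb
      have hne : b ≠ [] := by
        intro h
        rw [h] at hb'
        simp at hb'
      obtain ⟨c₁, c₂, P, Q, hEq, hP, hQ⟩ := isBiDyck_decomp hb'.2 hne
      obtain ⟨i, hi⟩ := even_length_of_pathHt_zero hP.2
      obtain ⟨j, hj⟩ := even_length_of_pathHt_zero hQ.2
      have hlen : P.length + Q.length + 2 = 2 * (n + 1) := by
        have := hb'.1
        rw [hEq] at this
        simp only [List.length_append, List.length_cons] at this
        omega
      refine ⟨⟨(i, j), c₁, c₂, P, Q⟩, ?_, hEq.symm⟩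
      simp only [hS, Finset.mem_sigma, Finset.mem_product, Finset.mem_univ, true_and]
      refine ⟨Finset.HasAntidiagonal.mem_antidiagonal.mpr (by omega), mem_dy.mpr ⟨by omega, hP⟩,
        mem_dy.mpr ⟨by omega, hQ⟩⟩
    · intro a ha
      rfl
  rw [← hbij, hS, Finset.sum_sigma]
  refine Finset.sum_congr rfl fun p hp => ?_
  simp only [Finset.sum_product, build]
  exact innerSum p.1 p.2

/-- The generating function `T₂(a,u)` of bi-coloured Dyck paths, counted by half-length
(conjugate to the power-series variable `u`) and by the number of multicoloured peaks
(conjugate to the polynomial variable `a`). -/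
noncomputable def T₂ : PowerSeries (Polynomial ℤ) :=
  PowerSeries.mk fun n =>
    ∑ f : Fin (2 * n) → BiStep,
      if IsBiDyck (List.ofFn f) then (Polynomial.X : Polynomial ℤ) ^ mcPeaks (List.ofFn f) else 0

lemma coeff_T₂ (n : ℕ) : PowerSeries.coeff (R := Polynomial ℤ) n T₂ = tD (2 * n) := by
  rw [T₂, PowerSeries.coeff_mk]
  exact tD_eq_coeff (2 * n)

/-- The generating function `T₂(a,u)` for bi-coloured Dyck paths satisfies the quadratic
equation `T₂ = 4u(T₂ - 1)T₂ + u(2a+2)T₂ + 1`. -/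
theorem stmt_0 :
    T₂ = 4 * PowerSeries.X * (T₂ - 1) * T₂
        + PowerSeries.X * PowerSeries.C (R := Polynomial ℤ) (2 * Polynomial.X + 2) * T₂ + 1 := by
  have hre : 4 * PowerSeries.X * (T₂ - 1) * T₂
        + PowerSeries.X * PowerSeries.C (R := Polynomial ℤ) (2 * Polynomial.X + 2) * T₂ + 1
      = PowerSeries.X * (PowerSeries.C (R := Polynomial ℤ) 4 * ((T₂ - 1) * T₂)
          + PowerSeries.C (R := Polynomial ℤ) (2 * Polynomial.X + 2) * T₂) + 1 := by
    rw [show (PowerSeries.C (R := Polynomial ℤ)) 4 = (4 : PowerSeries (Polynomial ℤ)) from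
      map_ofNat _ 4]
    ring
  rw [hre]
  ext n
  cases n with
  | zero =>
    rw [map_add, map_add, coeff_T₂, Nat.mul_zero, tD_zero]
    rw [PowerSeries.coeff_zero_eq_constantCoeff, map_mul, PowerSeries.constantCoeff_X,
      zero_mul, zero_add, map_one]
  | succ n =>
    rw [map_add, PowerSeries.coeff_succ_X_mul, PowerSeries.coeff_one, if_neg (by omega),
      add_zero, map_add, PowerSeries.coeff_C_mul, PowerSeries.coeff_C_mul,
      PowerSeries.coeff_mul, coeff_T₂, coeff_T₂]
    have hco : ∀ p : ℕ × ℕ,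
        (PowerSeries.coeff (R := Polynomial ℤ) p.1) (T₂ - 1) * (PowerSeries.coeff (R := Polynomial ℤ) p.2) T₂
          = (tD (2 * p.1) - if p.1 = 0 then 1 else 0) * tD (2 * p.2) := by
      intro p
      rw [map_sub, PowerSeries.coeff_one, coeff_T₂, coeff_T₂]
    rw [Finset.sum_congr rfl fun p _ => hco p, tD_rec n]
    have hsplit : ∀ p ∈ Finset.HasAntidiagonal.antidiagonal n,
        (if p.1 = 0 then 2 * Polynomial.X + 2 else 4) * (tD (2 * p.1) * tD (2 * p.2))
          = 4 * ((tD (2 * p.1) - if p.1 = 0 then 1 else 0) * tD (2 * p.2))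
            + (if p.1 = 0 then (2 * Polynomial.X + 2) * tD (2 * p.2) else 0) := by
      intro p _
      rcases eq_or_ne p.1 0 with h0 | h0
      · rw [h0, if_pos rfl, if_pos rfl, if_pos rfl, Nat.mul_zero, tD_zero]
        ring
      · rw [if_neg h0, if_neg h0, if_neg h0, add_zero, sub_zero]
    have hone : (∑ p ∈ Finset.HasAntidiagonal.antidiagonal n,
        if p.1 = 0 then (2 * Polynomial.X + 2) * tD (2 * p.2) else 0)
          = (2 * Polynomial.X + 2) * tD (2 * n) := by
      rw [Finset.sum_eq_single ((0 : ℕ), n)]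
      · rw [if_pos rfl]
      · intro p hp hne
        rw [if_neg]
        intro h0
        apply hne
        rw [Finset.HasAntidiagonal.mem_antidiagonal] at hp
        rcases p with ⟨p1, p2⟩
        simp only at h0
        subst h0
        simp only [Nat.zero_add] at hp
        rw [hp]
      · intro h
        exact absurd (Finset.HasAntidiagonal.mem_antidiagonal.mpr (by simp)) h
    rw [Finset.sum_congr rfl hsplit, Finset.sum_add_distrib, hone, Finset.mul_sum]
end

section
/- If T₂(a,u) satisfies T₂ = 4u(T₂-1)T₂ + u(2a+2)T₂ + 1, and T₁(a,u,y) satisfies T₁ = 2uy(T₂-1)T₁ + (uay + uy)T₁ + y, then T₁(a,u,y) = 4y / (4 + 2yu - 2yau - y + y√(1 - 12u + 4u² - 4au + 4a²u² - 8au²)), where √ is the formal power-series square root. -/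
open PowerSeries

/-- If `T₂(a,u)` satisfies `T₂ = 4u(T₂-1)T₂ + u(2a+2)T₂ + 1` (with constant term 1) and
`T₁(a,u,y)` satisfies `T₁ = 2uy(T₂-1)T₁ + (uay + uy)T₁ + y`, then
`T₁ = 4y / (4 + 2yu - 2yau - y + y√(1 - 12u + 4u² - 4au + 4a²u² - 8au²))`,
where `S` is the formal power-series square root (with constant term 1) of the radicand. -/
theorem stmt_2 (a y : ℝ) (S T₂ T₁ : PowerSeries ℝ)
    (hS0 : constantCoeff S = 1)
    (hS : S ^ 2 = 1 - 12 * X + 4 * X ^ 2 - 4 * C a * X + 4 * C a ^ 2 * X ^ 2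
        - 8 * C a * X ^ 2)
    (hT₂0 : constantCoeff T₂ = 1)
    (hT₂ : T₂ = 4 * X * (T₂ - 1) * T₂ + X * (2 * C a + 2) * T₂ + 1)
    (hT₁ : T₁ = 2 * X * C y * (T₂ - 1) * T₁ + (X * C a * C y + X * C y) * T₁ + C y) :
    T₁ = C (4 * y) *
        (4 + 2 * C y * X - 2 * C y * C a * X - C y + C y * S)⁻¹ := by
  set E : PowerSeries ℝ := 1 + 2 * X - 2 * C a * X - 8 * X * T₂ with hE
  have hE2 : E ^ 2 = 1 - 12 * X + 4 * X ^ 2 - 4 * C a * X + 4 * C a ^ 2 * X ^ 2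
      - 8 * C a * X ^ 2 := by
    rw [hE]
    linear_combination ((-16 : PowerSeries ℝ) * X) * hT₂
  have hprod : (S - E) * (S + E) = 0 := by linear_combination hS - hE2
  have hSE : S = E := by
    rcases mul_eq_zero.mp hprod with h | h
    · exact sub_eq_zero.mp h
    · exfalso
      have := congrArg constantCoeff h
      simp [hE, hS0, hT₂0] at this
  set D : PowerSeries ℝ :=
    4 + 2 * C y * X - 2 * C y * C a * X - C y + C y * S with hD
  have hD0 : constantCoeff D ≠ 0 := by
    simp [hD, hS0, map_ofNat]
  have hmul : T₁ * D = C (4 * y) := by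
    rw [hD, hSE, hE]
    have hCy : C (4 * y) = 4 * C y := by
      rw [map_mul, map_ofNat]
    rw [hCy]
    linear_combination (4 : PowerSeries ℝ) * hT₁
  have hinv : D * D⁻¹ = 1 := PowerSeries.mul_inv_cancel _ hD0
  calc T₁ = T₁ * (D * D⁻¹) := by rw [hinv, mul_one]
    _ = (T₁ * D) * D⁻¹ := by ring
    _ = C (4 * y) * D⁻¹ := by rw [hmul]
end

section
/- If T₁(a,u,x) = 4x/(4 + 2xu - 2xau - x + xΔ) with Δ = √(1 - 12u + 4u² - 4au + 4a²u² - 8au²), and T(a,u,x) satisfies T = u·T₁(a,u,x)·T + 1, then T(a,u,x) = (4 + 2xu - 2xau - x + xΔ)/(4 - 2xu - 2xau - x + xΔ). -/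
open PowerSeries

/-- If `T₁(a,u,x) = 4x/(4 + 2xu - 2xau - x + xΔ)` with
`Δ = √(1 - 12u + 4u² - 4au + 4a²u² - 8au²)` (the formal square root with constant term 1),
and `T(a,u,x)` satisfies `T = u·T₁·T + 1`, then
`T = (4 + 2xu - 2xau - x + xΔ)/(4 - 2xu - 2xau - x + xΔ)`. -/
theorem stmt_3 (a x : ℝ) (Δ T₁ T : PowerSeries ℝ)
    (hΔ0 : constantCoeff Δ = 1)
    (hΔ : Δ ^ 2 = 1 - 12 * X + 4 * X ^ 2 - 4 * C a * X + 4 * C a ^ 2 * X ^ 2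
        - 8 * C a * X ^ 2)
    (hT₁ : T₁ = C (4 * x) *
        (4 + 2 * C x * X - 2 * C x * C a * X - C x + C x * Δ)⁻¹)
    (hT : T = X * T₁ * T + 1) :
    T = (4 + 2 * C x * X - 2 * C x * C a * X - C x + C x * Δ) *
        (4 - 2 * C x * X - 2 * C x * C a * X - C x + C x * Δ)⁻¹ := by
  set D1 : PowerSeries ℝ :=
    4 + 2 * C x * X - 2 * C x * C a * X - C x + C x * Δ with hD1
  set D2 : PowerSeries ℝ :=
    4 - 2 * C x * X - 2 * C x * C a * X - C x + C x * Δ with hD2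
  have hc1 : constantCoeff D1 ≠ 0 := by
    simp [hD1, hΔ0, map_ofNat]
  have hc2 : constantCoeff D2 ≠ 0 := by
    simp [hD2, hΔ0, map_ofNat]
  have h1 : D1 * D1⁻¹ = 1 := PowerSeries.mul_inv_cancel _ hc1
  have h2 : D2 * D2⁻¹ = 1 := PowerSeries.mul_inv_cancel _ hc2
  have hsub : D1 - C (4 * x) * X = D2 := by
    rw [hD1, hD2]
    push_cast [map_mul, map_ofNat]
    ring
  have key : T * D2 = D1 := by
    have := congrArg (· * D1) hT
    simp only [hT₁] at this
    calc T * D2 = T * (D1 - C (4 * x) * X) := by rw [hsub]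
      _ = T * D1 - C (4 * x) * X * T := by ring
      _ = (X * (C (4 * x) * D1⁻¹) * T + 1) * D1 - C (4 * x) * X * T := by
            rw [← this]
      _ = C (4 * x) * X * T * (D1 * D1⁻¹) + D1 - C (4 * x) * X * T := by ring
      _ = D1 := by rw [h1]; ring
  calc T = T * (D2 * D2⁻¹) := by rw [h2, mul_one]
    _ = (T * D2) * D2⁻¹ := by ring
    _ = D1 * D2⁻¹ := by rw [key]
end

section
/- Every operation sequence over the alphabet {I₁, I₂, O₁, O₂} that is lexicographically minimal among all operation sequences producing a given deque-achievable permutation is canonical: it outputs eagerly (contains no consecutive I₁O₂ or I₂O₁), is standard (every tsip sub-word begins with I₁), and is top happy (I₂ or O₂ occurs only when the number of preceding I's exceeds the number of preceding O's by at least two). In particular, every deque-achievable permutation is produced by some canonical operation sequence. -/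
/-- The four deque operations: input to the top/bottom, output from the top/bottom. -/
inductive Letter : Type
  | I1 | I2 | O1 | O2
  deriving DecidableEq, Repr

open Letter

/-- Whether a letter is an input operation. -/
def Letter.isI : Letter → Bool
  | I1 => true | I2 => true | O1 => false | O2 => false

/-- Number of input letters in a word. -/
def countI (w : List Letter) : ℕ := (w.filter Letter.isI).length

/-- Number of output letters in a word. -/
def countO (w : List Letter) : ℕ := (w.filter fun x => !x.isI).length

/-- An operation sequence: equally many inputs and outputs, and every prefix has at
least as many inputs as outputs. -/
def IsOpSeq (w : List Letter) : Prop :=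
  countI w = countO w ∧ ∀ m : ℕ, countO (w.take m) ≤ countI (w.take m)

/-- A tsip word: for each end `j ∈ {1,2}` of the deque, the number of `Iⱼ` equals the
number of `Oⱼ`, and every prefix contains at least as many `Iⱼ` as `Oⱼ`. -/
def IsTsip (w : List Letter) : Prop :=
  (w.count I1 = w.count O1) ∧ (w.count I2 = w.count O2) ∧
    ∀ m : ℕ, (w.take m).count O1 ≤ (w.take m).count I1 ∧
      (w.take m).count O2 ≤ (w.take m).count I2

/-- A word outputs eagerly if it contains no consecutive sub-word `I₁O₂` or `I₂O₁`. -/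
def OutputsEagerly (w : List Letter) : Prop :=
  ¬ [I1, O2] <:+: w ∧ ¬ [I2, O1] <:+: w

/-- A word is standard if every non-empty tsip sub-word begins with `I₁`. -/
def Standard (w : List Letter) : Prop :=
  ∀ u : List Letter, u <:+: w → IsTsip u → u ≠ [] → u.head? = some I1

/-- A word is top happy if `I₂` and `O₂` occur only when the number of preceding inputs
exceeds the number of preceding outputs by at least two (i.e. the deque holds at least
two items). -/
def TopHappy (w : List Letter) : Prop :=
  ∀ u v : List Letter, ∀ x : Letter, w = u ++ x :: v → (x = I2 ∨ x = O2) →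
    countO u + 2 ≤ countI u

/-- A canonical operation sequence: outputs eagerly, standard and top happy. -/
def Canonical (w : List Letter) : Prop :=
  OutputsEagerly w ∧ Standard w ∧ TopHappy w

/-- The state of a deque machine: the remaining input, the deque contents (top first),
and the output produced so far. -/
structure DequeState : Type where
  inp : List ℕ
  dq : List ℕ
  out : List ℕ
  deriving DecidableEq, Repr

/-- Apply a single operation to a deque state, if possible. -/
def applyOp : Letter → DequeState → Option DequeState
  | I1, ⟨a :: r, d, o⟩ => some ⟨r, a :: d, o⟩
  | I2, ⟨a :: r, d, o⟩ => some ⟨r, d ++ [a], o⟩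
  | O1, ⟨r, a :: d, o⟩ => some ⟨r, d, o ++ [a]⟩
  | O2, ⟨r, d, o⟩ =>
      match d.getLast? with
      | some a => some ⟨r, d.dropLast, o ++ [a]⟩
      | none => none
  | I1, ⟨[], _, _⟩ => none
  | I2, ⟨[], _, _⟩ => none
  | O1, ⟨_, [], _⟩ => none

/-- Run a word of operations on a deque state. -/
def runOps : List Letter → DequeState → Option DequeState
  | [], s => some s
  | x :: w, s => (applyOp x s).bind (runOps w)

/-- `w` produces the permutation (given as the list `l`): applying `w` to the identity
input `0, 1, …, l.length - 1` empties the input and the deque with output exactly `l`. -/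
def Produces (w : List Letter) (l : List ℕ) : Prop :=
  runOps w ⟨List.range l.length, [], []⟩ = some ⟨[], [], l⟩

/-- A list is deque-achievable if it is a permutation of `0, …, n-1` produced by some
operation sequence. -/
def DequeAchievable (l : List ℕ) : Prop := ∃ w : List Letter, Produces w l

/-- The order `O₁ < O₂ < I₁ < I₂` on letters, via numerical values. -/
def letterVal : Letter → ℕ
  | Letter.O1 => 0 | Letter.O2 => 1 | Letter.I1 => 2 | Letter.I2 => 3

lemma runOps_append (u v : List Letter) (s : DequeState) :
    runOps (u ++ v) s = (runOps u s).bind (runOps v) := by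
  induction u generalizing s with
  | nil => simp [runOps]
  | cons x u ih =>
    simp only [List.cons_append, runOps]
    cases applyOp x s with
    | none => simp
    | some s' => simp [ih]

lemma run_split {u v : List Letter} {s res : DequeState}
    (h : runOps (u ++ v) s = some res) :
    ∃ s1, runOps u s = some s1 ∧ runOps v s1 = some res := by
  rw [runOps_append] at h
  cases h' : runOps u s with
  | none => rw [h'] at h; simp at h
  | some s1 => rw [h'] at h; exact ⟨s1, rfl, h⟩

lemma countI_cons (x : Letter) (w : List Letter) :
    countI (x :: w) = (if x.isI then 1 else 0) + countI w := by
  simp [countI, List.filter]; cases x <;> simp [Letter.isI] <;> omega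

lemma countO_cons (x : Letter) (w : List Letter) :
    countO (x :: w) = (if x.isI then 0 else 1) + countO w := by
  simp [countO, List.filter]; cases x <;> simp [Letter.isI] <;> omega

lemma run_lengths : ∀ (u : List Letter) (i d o i' d' o' : List ℕ),
    runOps u ⟨i, d, o⟩ = some ⟨i', d', o'⟩ →
    i.length = i'.length + countI u ∧ o'.length = o.length + countO u ∧
      d'.length + countO u = d.length + countI u := by
  intro u
  induction u with
  | nil => intro i d o i' d' o' h
           simp [runOps] at h
           obtain ⟨rfl, rfl, rfl⟩ := h
           simp [countI, countO]
  | cons x u ih =>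
    intro i d o i' d' o' h
    rw [runOps] at h
    cases x with
    | I1 =>
      cases i with
      | nil => simp [applyOp] at h
      | cons a r =>
        simp only [applyOp, Option.bind_some] at h
        have := ih r (a :: d) o i' d' o' h
        simp [countI_cons, countO_cons, Letter.isI] at *
        omega
    | I2 =>
      cases i with
      | nil => simp [applyOp] at h
      | cons a r =>
        simp only [applyOp, Option.bind_some] at h
        have := ih r (d ++ [a]) o i' d' o' h
        simp [countI_cons, countO_cons, Letter.isI] at *
        omega
    | O1 =>
      cases d with
      | nil => simp [applyOp] at h
      | cons a d2 =>
        simp only [applyOp, Option.bind_some] at h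
        have := ih i d2 (o ++ [a]) i' d' o' h
        simp [countI_cons, countO_cons, Letter.isI] at *
        omega
    | O2 =>
      rcases List.eq_nil_or_concat d with rfl | ⟨d2, a, rfl⟩
      · simp [applyOp] at h
      · simp only [List.concat_eq_append] at h
        simp only [applyOp, List.getLast?_concat, List.dropLast_concat,
          Option.bind_some] at h
        have := ih i d2 (o ++ [a]) i' d' o' h
        simp [countI_cons, countO_cons, Letter.isI] at *
        omega

def Letter.mirror : Letter → Letter
  | I1 => I2 | I2 => I1 | O1 => O2 | O2 => O1

lemma applyOp_mirror (x : Letter) (i d o : List ℕ) :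
    applyOp x.mirror ⟨i, d.reverse, o⟩ =
      (applyOp x ⟨i, d, o⟩).map (fun s => ⟨s.inp, s.dq.reverse, s.out⟩) := by
  cases x with
  | I1 =>
    cases i with
    | nil => simp [applyOp, Letter.mirror]
    | cons a r => simp [applyOp, Letter.mirror]
  | I2 =>
    cases i with
    | nil => simp [applyOp, Letter.mirror]
    | cons a r => simp [applyOp, Letter.mirror]
  | O1 =>
    cases d with
    | nil => simp [applyOp, Letter.mirror]
    | cons a d2 =>
      simp only [Letter.mirror, List.reverse_cons, applyOp, List.getLast?_concat,
        List.dropLast_concat]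
      simp
  | O2 =>
    rcases List.eq_nil_or_concat d with rfl | ⟨d2, a, rfl⟩
    · simp [applyOp, Letter.mirror]
    · simp only [List.concat_eq_append, List.reverse_append, List.reverse_cons,
        List.reverse_nil, List.nil_append, List.singleton_append, Letter.mirror]
      simp [applyOp, List.getLast?_concat, List.dropLast_concat]

lemma runOps_mirror (u : List Letter) (i d o : List ℕ) :
    runOps (u.map Letter.mirror) ⟨i, d.reverse, o⟩ =
      (runOps u ⟨i, d, o⟩).map (fun s => ⟨s.inp, s.dq.reverse, s.out⟩) := by
  induction u generalizing i d o with
  | nil => simp [runOps]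
  | cons x u ih =>
    simp only [List.map_cons, runOps, applyOp_mirror]
    cases h : applyOp x ⟨i, d, o⟩ with
    | none => simp
    | some s =>
      obtain ⟨i1, d1, o1⟩ := s
      simpa using ih i1 d1 o1

lemma tsip_sim : ∀ (u : List Letter) (i o T B d0 : List ℕ) (res : DequeState),
    (∀ m, (u.take m).count O1 ≤ T.length + (u.take m).count I1 ∧
      (u.take m).count O2 ≤ B.length + (u.take m).count I2) →
    runOps u ⟨i, T ++ d0 ++ B, o⟩ = some res →
    ∃ (i' o' T' B' : List ℕ), res = ⟨i', T' ++ d0 ++ B', o'⟩ ∧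
      runOps (u.map Letter.mirror) ⟨i, B.reverse ++ d0 ++ T.reverse, o⟩ =
        some ⟨i', B'.reverse ++ d0 ++ T'.reverse, o'⟩ ∧
      T'.length + u.count O1 = T.length + u.count I1 ∧
      B'.length + u.count O2 = B.length + u.count I2 := by
  intro u
  induction u with
  | nil =>
    intro i o T B d0 res _ h
    simp only [runOps, Option.some.injEq] at h
    refine ⟨i, o, T, B, ?_, by simp [runOps], by simp, by simp⟩
    rw [← h]
  | cons x u ih =>
    intro i o T B d0 res hsafe h
    rw [runOps] at h
    have hsafe' := fun m => hsafe (m + 1)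
    simp only [List.take_succ_cons, List.count_cons] at hsafe'
    cases x with
    | I1 =>
      cases i with
      | nil => simp [applyOp] at h
      | cons a r =>
        simp only [applyOp] at h
        rw [show (a :: (T ++ d0 ++ B)) = (a :: T) ++ d0 ++ B by simp] at h
        obtain ⟨i', o', T', B', hres, hrun, hT, hB⟩ :=
          ih r o (a :: T) B d0 res (by intro m; have := hsafe' m; simp at this ⊢; omega) h
        refine ⟨i', o', T', B', hres, ?_, ?_, ?_⟩
        · simp only [List.map_cons, Letter.mirror, runOps, applyOp, Option.bind_some]
          rw [show (B.reverse ++ d0 ++ T.reverse ++ [a]) = B.reverse ++ d0 ++ (a :: T).reverse by simp]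
          exact hrun
        · simp only [List.count_cons] at hT hB ⊢; simp at hT hB ⊢; omega
        · simp only [List.count_cons] at hT hB ⊢; simp at hT hB ⊢; omega
    | I2 =>
      cases i with
      | nil => simp [applyOp] at h
      | cons a r =>
        simp only [applyOp] at h
        rw [show (T ++ d0 ++ B ++ [a]) = T ++ d0 ++ (B ++ [a]) by simp] at h
        obtain ⟨i', o', T', B', hres, hrun, hT, hB⟩ :=
          ih r o T (B ++ [a]) d0 res (by intro m; have := hsafe' m; simp at this ⊢; omega) h
        refine ⟨i', o', T', B', hres, ?_, ?_, ?_⟩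
        · simp only [List.map_cons, Letter.mirror, runOps, applyOp, Option.bind_some]
          rw [show (a :: (B.reverse ++ d0 ++ T.reverse)) = (B ++ [a]).reverse ++ d0 ++ T.reverse by simp]
          exact hrun
        · simp only [List.count_cons] at hT hB ⊢; simp at hT hB ⊢; omega
        · simp only [List.count_cons] at hT hB ⊢; simp at hT hB ⊢; omega
    | O1 =>
      have hT1 : T ≠ [] := by
        have := (hsafe 1).1
        simp at this
        intro hnil; rw [hnil] at this; simp at this
      obtain ⟨a, T2, rfl⟩ := List.exists_cons_of_ne_nil hT1
      simp only [List.cons_append, applyOp] at h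
      obtain ⟨i', o', T', B', hres, hrun, hT, hB⟩ :=
        ih i (o ++ [a]) T2 B d0 res (by intro m; have := hsafe' m; simp at this ⊢; omega) h
      refine ⟨i', o', T', B', hres, ?_, ?_, ?_⟩
      · simp only [List.map_cons, Letter.mirror, runOps]
        rw [show (B.reverse ++ d0 ++ (a :: T2).reverse) = (B.reverse ++ d0 ++ T2.reverse) ++ [a] by simp]
        simp only [applyOp, List.getLast?_concat, List.dropLast_concat, Option.bind_some]
        exact hrun
      · simp only [List.count_cons] at hT hB ⊢; simp at hT hB ⊢; omega
      · simp only [List.count_cons] at hT hB ⊢; simp at hT hB ⊢; omega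
    | O2 =>
      have hB1 : B ≠ [] := by
        have := (hsafe 1).2
        simp at this
        intro hnil; rw [hnil] at this; simp at this
      rcases List.eq_nil_or_concat B with rfl | ⟨B2, a, rfl⟩
      · exact absurd rfl hB1
      simp only [List.concat_eq_append] at *
      rw [show (T ++ d0 ++ (B2 ++ [a])) = (T ++ d0 ++ B2) ++ [a] by simp] at h
      simp only [applyOp, List.getLast?_concat, List.dropLast_concat] at h
      obtain ⟨i', o', T', B', hres, hrun, hT, hB⟩ :=
        ih i (o ++ [a]) T B2 d0 res (by intro m; have := hsafe' m; simp at this ⊢; omega) h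
      refine ⟨i', o', T', B', hres, ?_, ?_, ?_⟩
      · simp only [List.map_cons, Letter.mirror, runOps]
        rw [show ((B2 ++ [a]).reverse ++ d0 ++ T.reverse) = a :: (B2.reverse ++ d0 ++ T.reverse) by simp]
        simp only [applyOp, Option.bind_some]
        exact hrun
      · simp only [List.count_cons] at hT hB ⊢; simp at hT hB ⊢; omega
      · simp only [List.count_cons] at hT hB ⊢; simp at hT hB ⊢; omega








lemma run_join {u v : List Letter} {s s1 r : DequeState}
    (h1 : runOps u s = some s1) (h2 : runOps v s1 = some r) :
    runOps (u ++ v) s = some r := by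
  rw [runOps_append, h1]; exact h2

lemma runOps_cons (x : Letter) (w : List Letter) (s : DequeState) :
    runOps (x :: w) s = (applyOp x s).bind (runOps w) := rfl

lemma applyOp_O2 (r o d : List ℕ) (c : ℕ) :
    applyOp O2 ⟨r, d ++ [c], o⟩ = some ⟨r, d, o ++ [c]⟩ := by
  simp [applyOp, List.getLast?_concat, List.dropLast_concat]

theorem main1 (l : List ℕ) (w : List Letter) (hw : Produces w l)
    (hmin : ∀ v : List Letter, Produces v l →
      ¬ List.Lex (fun x y => letterVal x < letterVal y) v w) :
    Canonical w := by
  unfold Produces at hw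
  refine ⟨⟨?_, ?_⟩, ?_, ?_⟩
  · -- no I1 O2
    intro hinf
    obtain ⟨p, sfx, hweq⟩ := hinf
    subst hweq
    rw [List.append_assoc] at hw
    obtain ⟨s1, hp, hrest⟩ := run_split hw
    obtain ⟨i1, d1, o1⟩ := s1
    cases i1 with
    | nil => simp [runOps, applyOp] at hrest
    | cons a r =>
      have hrest1 : runOps (O2 :: sfx) ⟨r, a :: d1, o1⟩ = some ⟨[], [], l⟩ := by
        rw [show ([I1, O2] ++ sfx) = I1 :: (O2 :: sfx) from rfl, runOps_cons,
          show applyOp I1 ⟨a :: r, d1, o1⟩ = some ⟨r, a :: d1, o1⟩ from rfl] at hrest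
        exact hrest
      rcases List.eq_nil_or_concat d1 with rfl | ⟨d2, c, rfl⟩
      all_goals try simp only [List.concat_eq_append] at *
      · -- empty deque: use [I1, O1]
        have hrest2 : runOps sfx ⟨r, [], o1 ++ [a]⟩ = some ⟨[], [], l⟩ := by
          rw [runOps_cons, show (a :: ([] : List ℕ)) = [] ++ [a] from rfl,
            applyOp_O2] at hrest1
          exact hrest1
        have hv : Produces (p ++ ([I1, O1] ++ sfx)) l := by
          refine run_join hp ?_
          rw [show ([I1, O1] ++ sfx) = I1 :: O1 :: sfx from rfl, runOps_cons,
            show applyOp I1 ⟨a :: r, [], o1⟩ = some ⟨r, [a], o1⟩ from rfl,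
            Option.bind_some, runOps_cons,
            show applyOp O1 ⟨r, [a], o1⟩ = some ⟨r, [], o1 ++ [a]⟩ from rfl,
            Option.bind_some]
          exact hrest2
        refine hmin _ hv ?_
        rw [List.append_assoc]
        exact List.Lex.append_left _ (List.Lex.cons (List.Lex.rel (by decide))) p
      · -- nonempty deque: use [O2, I1]
        have hrest2 : runOps sfx ⟨r, a :: d2, o1 ++ [c]⟩ = some ⟨[], [], l⟩ := by
          rw [runOps_cons, show (a :: (d2 ++ [c])) = (a :: d2) ++ [c] from rfl,
            applyOp_O2, Option.bind_some] at hrest1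
          exact hrest1
        have hv : Produces (p ++ ([O2, I1] ++ sfx)) l := by
          refine run_join hp ?_
          rw [show ([O2, I1] ++ sfx) = O2 :: I1 :: sfx from rfl, runOps_cons,
            applyOp_O2, Option.bind_some, runOps_cons,
            show applyOp I1 ⟨a :: r, d2, o1 ++ [c]⟩ = some ⟨r, a :: d2, o1 ++ [c]⟩ from rfl,
            Option.bind_some]
          exact hrest2
        refine hmin _ hv ?_
        rw [List.append_assoc]
        exact List.Lex.append_left _ (List.Lex.rel (by decide)) p
  · -- no I2 O1
    intro hinf
    obtain ⟨p, sfx, hweq⟩ := hinf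
    subst hweq
    rw [List.append_assoc] at hw
    obtain ⟨s1, hp, hrest⟩ := run_split hw
    obtain ⟨i1, d1, o1⟩ := s1
    cases i1 with
    | nil => simp [runOps, applyOp] at hrest
    | cons a r =>
      have hrest1 : runOps (O1 :: sfx) ⟨r, d1 ++ [a], o1⟩ = some ⟨[], [], l⟩ := by
        rw [show ([I2, O1] ++ sfx) = I2 :: (O1 :: sfx) from rfl, runOps_cons,
          show applyOp I2 ⟨a :: r, d1, o1⟩ = some ⟨r, d1 ++ [a], o1⟩ from rfl] at hrest
        exact hrest
      cases d1 with
      | nil => -- empty deque: use [I1, O1]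
        have hrest2 : runOps sfx ⟨r, [], o1 ++ [a]⟩ = some ⟨[], [], l⟩ := by
          rw [runOps_cons,
            show applyOp O1 ⟨r, [] ++ [a], o1⟩ = some ⟨r, [], o1 ++ [a]⟩ from rfl,
            Option.bind_some] at hrest1
          exact hrest1
        have hv : Produces (p ++ ([I1, O1] ++ sfx)) l := by
          refine run_join hp ?_
          rw [show ([I1, O1] ++ sfx) = I1 :: O1 :: sfx from rfl, runOps_cons,
            show applyOp I1 ⟨a :: r, [], o1⟩ = some ⟨r, [a], o1⟩ from rfl,
            Option.bind_some, runOps_cons,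
            show applyOp O1 ⟨r, [a], o1⟩ = some ⟨r, [], o1 ++ [a]⟩ from rfl,
            Option.bind_some]
          exact hrest2
        refine hmin _ hv ?_
        rw [List.append_assoc]
        exact List.Lex.append_left _ (List.Lex.rel (by decide)) p
      | cons b d2 => -- nonempty: use [O1, I2]
        have hrest2 : runOps sfx ⟨r, d2 ++ [a], o1 ++ [b]⟩ = some ⟨[], [], l⟩ := by
          rw [runOps_cons,
            show applyOp O1 ⟨r, (b :: d2) ++ [a], o1⟩ = some ⟨r, d2 ++ [a], o1 ++ [b]⟩ from rfl,
            Option.bind_some] at hrest1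
          exact hrest1
        have hv : Produces (p ++ ([O1, I2] ++ sfx)) l := by
          refine run_join hp ?_
          rw [show ([O1, I2] ++ sfx) = O1 :: I2 :: sfx from rfl, runOps_cons,
            show applyOp O1 ⟨a :: r, b :: d2, o1⟩ = some ⟨a :: r, d2, o1 ++ [b]⟩ from rfl,
            Option.bind_some, runOps_cons,
            show applyOp I2 ⟨a :: r, d2, o1 ++ [b]⟩ = some ⟨r, d2 ++ [a], o1 ++ [b]⟩ from rfl,
            Option.bind_some]
          exact hrest2
        refine hmin _ hv ?_
        rw [List.append_assoc]
        exact List.Lex.append_left _ (List.Lex.rel (by decide)) p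
  · -- Standard
    intro u hinf htsip hne
    obtain ⟨x, u', rfl⟩ := List.exists_cons_of_ne_nil hne
    suffices hx : x = I1 by rw [hx]; rfl
    obtain ⟨p, sfx, hweq⟩ := hinf
    cases x with
    | I1 => rfl
    | O1 =>
      exfalso
      have := (htsip.2.2 1).1
      simp [List.count_cons] at this
    | O2 =>
      exfalso
      have := (htsip.2.2 1).2
      simp [List.count_cons] at this
    | I2 =>
      exfalso
      subst hweq
      rw [List.append_assoc] at hw
      obtain ⟨s1, hp, hrest⟩ := run_split hw
      obtain ⟨s2, hu, hsfx⟩ := run_split hrest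
      obtain ⟨i1, d1, o1⟩ := s1
      obtain ⟨i', o', T', B', hres, hrun, hT, hB⟩ :=
        tsip_sim (I2 :: u') i1 o1 [] [] d1 s2
          (by intro m; have := htsip.2.2 m; simpa using this)
          (by simpa using hu)
      have hT0 : T' = [] := by
        have h1 := htsip.1
        have : T'.length = 0 := by
          simp only [List.count_cons, List.length_nil] at hT h1
          simp at hT h1
          omega
        exact List.eq_nil_of_length_eq_zero this
      have hB0 : B' = [] := by
        have h2 := htsip.2.1
        have : B'.length = 0 := by
          simp only [List.count_cons, List.length_nil] at hB h2
          simp at hB h2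
          omega
        exact List.eq_nil_of_length_eq_zero this
      subst hT0; subst hB0
      simp only [List.nil_append, List.append_nil, List.reverse_nil] at hres hrun
      subst hres
      have hv : Produces (p ++ (((I2 :: u').map Letter.mirror) ++ sfx)) l :=
        run_join hp (run_join hrun hsfx)
      refine hmin _ hv ?_
      rw [List.append_assoc]
      exact List.Lex.append_left _ (List.Lex.rel (by decide)) p
  · -- TopHappy
    intro u v x hweq hx
    by_contra hlt
    push_neg at hlt
    subst hweq
    obtain ⟨s1, hu, hrest⟩ := run_split hw
    obtain ⟨i1, d1, o1⟩ := s1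
    have hlen := run_lengths u _ _ _ _ _ _ hu
    have hd1 : d1.length ≤ 1 := by
      have h3 := hlen.2.2
      simp only [List.length_nil] at h3
      omega
    rcases hx with rfl | rfl
    · -- x = I2
      cases i1 with
      | nil => simp [runOps, applyOp] at hrest
      | cons a r =>
        have hrest1 : runOps v ⟨r, d1 ++ [a], o1⟩ = some ⟨[], [], l⟩ := by
          rw [runOps_cons,
            show applyOp I2 ⟨a :: r, d1, o1⟩ = some ⟨r, d1 ++ [a], o1⟩ from rfl,
            Option.bind_some] at hrest
          exact hrest
        cases d1 with
        | nil =>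
          have hv : Produces (u ++ I1 :: v) l := by
            refine run_join hu ?_
            rw [runOps_cons,
              show applyOp I1 ⟨a :: r, [], o1⟩ = some ⟨r, [a], o1⟩ from rfl,
              Option.bind_some]
            exact hrest1
          exact hmin _ hv (List.Lex.append_left _ (List.Lex.rel (by decide)) u)
        | cons b d2 =>
          have hd2 : d2 = [] := by
            simp only [List.length_cons] at hd1
            exact List.eq_nil_of_length_eq_zero (by omega)
          subst hd2
          have hmir : runOps (v.map Letter.mirror) ⟨r, [a, b], o1⟩ = some ⟨[], [], l⟩ := by
            have := runOps_mirror v r [b, a] o1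
            rw [show ([b, a] : List ℕ).reverse = [a, b] from rfl] at this
            rw [this, show ([b] ++ [a] : List ℕ) = [b, a] from rfl] at *
            rw [hrest1]
            rfl
          have hv : Produces (u ++ I1 :: v.map Letter.mirror) l := by
            refine run_join hu ?_
            rw [runOps_cons,
              show applyOp I1 ⟨a :: r, [b], o1⟩ = some ⟨r, [a, b], o1⟩ from rfl,
              Option.bind_some]
            exact hmir
          exact hmin _ hv (List.Lex.append_left _ (List.Lex.rel (by decide)) u)
    · -- x = O2
      rcases List.eq_nil_or_concat d1 with rfl | ⟨d2, c, rfl⟩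
      all_goals try simp only [List.concat_eq_append] at *
      · simp [runOps, applyOp] at hrest
      · have hd2 : d2 = [] := by
          simp only [List.length_append, List.length_cons, List.length_nil] at hd1
          exact List.eq_nil_of_length_eq_zero (by omega)
        subst hd2
        have hrest1 : runOps v ⟨i1, [], o1 ++ [c]⟩ = some ⟨[], [], l⟩ := by
          rw [runOps_cons, show ([] ++ [c] : List ℕ) = [] ++ [c] from rfl, applyOp_O2,
            Option.bind_some] at hrest
          exact hrest
        have hv : Produces (u ++ O1 :: v) l := by
          refine run_join hu ?_
          rw [runOps_cons,
            show applyOp O1 ⟨i1, [] ++ [c], o1⟩ = some ⟨i1, [], o1 ++ [c]⟩ from rfl,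
            Option.bind_some]
          exact hrest1
        exact hmin _ hv (List.Lex.append_left _ (List.Lex.rel (by decide)) u)


instance : Fintype Letter := ⟨⟨{I1, I2, O1, O2}, by decide⟩, by intro x; cases x <;> decide⟩
instance : LinearOrder Letter := LinearOrder.lift' letterVal (by decide)
lemma letter_lt (x y : Letter) : x < y ↔ letterVal x < letterVal y := Iff.rfl

lemma countIO (v : List Letter) : countI v + countO v = v.length := by
  induction v with
  | nil => rfl
  | cons x v ih => rw [countI_cons, countO_cons]; cases x <;> simp [Letter.isI] <;> omega

lemma produces_length {v : List Letter} {l : List ℕ} (h : Produces v l) :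
    v.length = 2 * l.length := by
  unfold Produces at h
  have h2 := run_lengths v _ _ _ _ _ _ h
  have hio := countIO v
  simp only [List.length_range, List.length_nil] at h2
  omega


/-- Every operation sequence that is lexicographically minimal (for the order
`O₁ < O₂ < I₁ < I₂`) among all operation sequences producing a given deque-achievable
permutation is canonical; in particular every deque-achievable permutation is produced
by some canonical operation sequence. -/
theorem stmt_5 :
    (∀ (l : List ℕ) (w : List Letter), Produces w l →
        (∀ v : List Letter, Produces v l →
          ¬ List.Lex (fun x y => letterVal x < letterVal y) v w) →
        Canonical w) ∧
      ∀ l : List ℕ, DequeAchievable l → ∃ w : List Letter, Canonical w ∧ Produces w l := by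
  constructor
  · exact main1
  · intro l hach
    obtain ⟨w0, hw0⟩ := hach
    have hfin : {v : List Letter | Produces v l}.Finite :=
      (List.finite_length_eq Letter (2 * l.length)).subset fun v hv => produces_length hv
    obtain ⟨w, hwS, hminle⟩ := Set.exists_min_image _ id hfin ⟨w0, hw0⟩
    refine ⟨w, main1 l w hwS ?_, hwS⟩
    intro v hv hlex
    have h1 : List.Lex (· < ·) v w :=
      List.Lex.imp (fun a b h => (letter_lt a b).2 h) v w hlex
    exact absurd h1 (not_lt.mpr (hminle v hv))
end

section
/- Every non-empty operation sequence w admits a unique decomposition w = x₁w₁x₂w₂⋯x_{2m-1}w_{2m-1}x_{2m}v where m ≥ 1, each xᵢ ∈ {I₁,I₂,O₁,O₂}, the word x₁x₂⋯x_{2m} is an unbreakable operation sequence, each wᵢ is a (possibly empty) tsip word, and v is an operation sequence. -/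
open Letter

/-- An unbreakable operation sequence: non-empty, contains no tsip sub-word other than
possibly itself or the empty word, and no proper non-empty prefix is an operation
sequence (the deque is never empty strictly inside the sequence). -/
def IsUnbreakable (s : List Letter) : Prop :=
  IsOpSeq s ∧ s ≠ [] ∧
    (∀ u : List Letter, u <:+: s → IsTsip u → u = [] ∨ u = s) ∧
    ∀ p : List Letter, p <+: s → IsOpSeq p → p = [] ∨ p = s

/-- `IsDecomp w xs ws v` asserts that `w = x₁w₁x₂w₂⋯x_{2m-1}w_{2m-1}x_{2m}v`, where
`xs = [x₁,…,x_{2m}]` with `m ≥ 1` forms an unbreakable operation sequence, each `wᵢ` in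
`ws = [w₁,…,w_{2m-1}]` is a (possibly empty) tsip word, and `v` is an operation
sequence. -/
def IsDecomp (w : List Letter) (xs : List Letter) (ws : List (List Letter))
    (v : List Letter) : Prop :=
  (∃ m : ℕ, 0 < m ∧ xs.length = 2 * m) ∧
    xs.length = ws.length + 1 ∧
    IsUnbreakable xs ∧
    (∀ wi ∈ ws, IsTsip wi) ∧
    IsOpSeq v ∧
    w = (List.zipWith (fun x wi => x :: wi) xs (ws ++ [[]])).flatten ++ v

namespace Dcmp
open List

lemma countI_eq (w : List Letter) : countI w = w.count I1 + w.count I2 := by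
  induction w with
  | nil => rfl
  | cons x t ih =>
    cases x <;> simp [countI, List.count_cons, Letter.isI, List.filter_cons] at * <;> omega

lemma countO_eq (w : List Letter) : countO w = w.count O1 + w.count O2 := by
  induction w with
  | nil => rfl
  | cons x t ih =>
    cases x <;> simp [countO, List.count_cons, Letter.isI, List.filter_cons] at * <;> omega

lemma length_eq (w : List Letter) : w.length = countI w + countO w := by
  induction w with
  | nil => rfl
  | cons x t ih =>
    cases x <;> simp [countI, countO, Letter.isI, List.filter_cons] at * <;> omega

lemma isOpSeq_iff {w : List Letter} :
    IsOpSeq w ↔ countI w = countO w ∧ ∀ s, s <+: w → countO s ≤ countI s := by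
  constructor
  · rintro ⟨h1, h2⟩
    exact ⟨h1, fun s hs => by rw [List.prefix_iff_eq_take.mp hs]; exact h2 _⟩
  · rintro ⟨h1, h2⟩
    exact ⟨h1, fun m => h2 _ (List.take_prefix _ _)⟩

lemma isTsip_iff {w : List Letter} :
    IsTsip w ↔ (w.count I1 = w.count O1) ∧ (w.count I2 = w.count O2) ∧
      ∀ s, s <+: w → s.count O1 ≤ s.count I1 ∧ s.count O2 ≤ s.count I2 := by
  constructor
  · rintro ⟨h1, h2, h3⟩
    exact ⟨h1, h2, fun s hs => by rw [List.prefix_iff_eq_take.mp hs]; exact h3 _⟩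
  · rintro ⟨h1, h2, h3⟩
    exact ⟨h1, h2, fun m => h3 _ (List.take_prefix _ _)⟩

lemma tsip_nil : IsTsip ([] : List Letter) := by
  refine ⟨rfl, rfl, fun m => by simp⟩

lemma tsip_opSeq {w : List Letter} (h : IsTsip w) : IsOpSeq w := by
  rw [isTsip_iff] at h
  rw [isOpSeq_iff]
  obtain ⟨h1, h2, h3⟩ := h
  refine ⟨by rw [countI_eq, countO_eq]; omega, fun s hs => ?_⟩
  have := h3 s hs
  rw [countI_eq, countO_eq]; omega

lemma tsip_append {a b : List Letter} (ha : IsTsip a) (hb : IsTsip b) : IsTsip (a ++ b) := by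
  rw [isTsip_iff] at *
  obtain ⟨a1, a2, a3⟩ := ha
  obtain ⟨b1, b2, b3⟩ := hb
  refine ⟨by simp [List.count_append]; omega, by simp [List.count_append]; omega, fun s hs => ?_⟩
  by_cases hl : s.length ≤ a.length
  · exact a3 s (List.prefix_of_prefix_length_le hs (List.prefix_append a b) hl)
  · have hap : a <+: s := List.prefix_of_prefix_length_le (List.prefix_append a b) hs (by omega)
    obtain ⟨t, rfl⟩ := hap
    have ht : t <+: b := by
      obtain ⟨r, hr⟩ := hs
      rw [List.append_assoc] at hr
      exact ⟨r, List.append_cancel_left hr⟩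
    have := b3 t ht
    simp [List.count_append]; omega

lemma tsip_right_quot {a b : List Letter} (hab : IsTsip (a ++ b)) (ha : IsTsip a) : IsTsip b := by
  rw [isTsip_iff] at *
  obtain ⟨c1, c2, c3⟩ := hab
  obtain ⟨a1, a2, a3⟩ := ha
  simp [List.count_append] at c1 c2
  refine ⟨by omega, by omega, fun s hs => ?_⟩
  obtain ⟨t, rfl⟩ := hs
  have := c3 (a ++ s) ⟨t, by simp⟩
  simp [List.count_append] at this
  omega


def body (l : List (Letter × List Letter)) : List Letter :=
  (l.map fun p => p.1 :: p.2).flatten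

@[simp] lemma body_nil : body [] = [] := rfl

@[simp] lemma body_cons (x : Letter) (w : List Letter) (l : List (Letter × List Letter)) :
    body ((x, w) :: l) = x :: (w ++ body l) := by simp [body]

@[simp] lemma body_append (a b : List (Letter × List Letter)) :
    body (a ++ b) = body a ++ body b := by simp [body]

lemma body_ne_nil {l : List (Letter × List Letter)} (h : l ≠ []) : body l ≠ [] := by
  cases l with
  | nil => simp at h
  | cons a t => cases a; simp

lemma body_eq_nil {l : List (Letter × List Letter)} (h : body l = []) : l = [] := by
  by_contra hc; exact body_ne_nil hc h

def sumc (a : Letter) (l : List (Letter × List Letter)) : ℕ :=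
  (l.map fun p => p.2.count a).sum

@[simp] lemma sumc_nil (a : Letter) : sumc a [] = 0 := rfl

@[simp] lemma sumc_cons (a : Letter) (p : Letter × List Letter) (l : List (Letter × List Letter)) :
    sumc a (p :: l) = p.2.count a + sumc a l := by simp [sumc]

@[simp] lemma sumc_append (a : Letter) (l₁ l₂ : List (Letter × List Letter)) :
    sumc a (l₁ ++ l₂) = sumc a l₁ + sumc a l₂ := by simp [sumc]

lemma count_body (a : Letter) (l : List (Letter × List Letter)) :
    (body l).count a = (l.map Prod.fst).count a + sumc a l := by
  induction l with
  | nil => rfl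
  | cons p t ih =>
    cases p with
    | mk x w => simp [List.count_append, List.count_cons, ih]; omega

lemma sumc_congr {a b : Letter} {l : List (Letter × List Letter)}
    (h : ∀ p ∈ l, p.2.count a = p.2.count b) : sumc a l = sumc b l := by
  induction l with
  | nil => rfl
  | cons p t ih =>
    simp [h p (by simp), ih fun q hq => h q (by simp [hq])]

/-- Structure of prefixes of `body l`. -/
lemma prefix_body {l : List (Letter × List Letter)} {s : List Letter} (hs : s <+: body l) :
    (∃ l₁, l₁ <+: l ∧ s = body l₁) ∨
    (∃ l₁ x w l₂ wp, l = l₁ ++ (x, w) :: l₂ ∧ wp <+: w ∧ s = body (l₁ ++ [(x, wp)])) := by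
  induction l generalizing s with
  | nil => left; exact ⟨[], by simp, by simpa using List.prefix_nil.mp (by simpa using hs)⟩
  | cons p t ih =>
    obtain ⟨x, w⟩ := p
    rcases List.prefix_cons_iff.mp (by simpa using hs) with h | ⟨s', rfl, hs'⟩
    · left; exact ⟨[], by simp, h⟩
    · -- s' <+: w ++ body t
      by_cases hl : s'.length ≤ w.length
      · right
        have hwp : s' <+: w := List.prefix_of_prefix_length_le hs' (List.prefix_append w (body t)) hl
        exact ⟨[], x, w, t, s', by simp, hwp, by simp⟩
      · have hw : w <+: s' := List.prefix_of_prefix_length_le (List.prefix_append w (body t)) hs' (by omega)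
        obtain ⟨r, rfl⟩ := hw
        have hr : r <+: body t := by
          obtain ⟨q, hq⟩ := hs'
          rw [List.append_assoc] at hq
          exact ⟨q, List.append_cancel_left hq⟩
        rcases ih hr with ⟨l₁, hl₁, rfl⟩ | ⟨l₁, y, u, l₂, wp, rfl, hwp, rfl⟩
        · left; exact ⟨(x, w) :: l₁, by simpa using hl₁, by simp⟩
        · right; exact ⟨(x, w) :: l₁, y, u, l₂, wp, by simp, hwp, by simp⟩


lemma prefix_body_of_prefix {m l : List (Letter × List Letter)} (h : m <+: l) :
    body m <+: body l := by
  obtain ⟨r, rfl⟩ := h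
  simp

lemma prefix_fst_struct {l : List (Letter × List Letter)} {q : List Letter}
    (h : q <+: l.map Prod.fst) : ∃ m, m <+: l ∧ q = m.map Prod.fst := by
  refine ⟨l.take q.length, List.take_prefix _ _, ?_⟩
  rw [List.map_take, ← List.prefix_iff_eq_take.mp h]

lemma prefix_snoc {q u : List Letter} {x : Letter} (h : q <+: u ++ [x]) :
    q <+: u ∨ q = u ++ [x] := by
  by_cases hl : q.length ≤ u.length
  · exact Or.inl (List.prefix_of_prefix_length_le h (List.prefix_append u [x]) hl)
  · right
    refine List.IsPrefix.eq_of_length h ?_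
    have := h.length_le
    simp at this ⊢
    omega

lemma sumc_bal {l : List (Letter × List Letter)} (ht : ∀ p ∈ l, IsTsip p.2) :
    sumc I1 l = sumc O1 l ∧ sumc I2 l = sumc O2 l :=
  ⟨sumc_congr fun p hp => (ht p hp).1, sumc_congr fun p hp => (ht p hp).2.1⟩

lemma fst_dom_O {l : List (Letter × List Letter)} (ht : ∀ p ∈ l, IsTsip p.2)
    (hdom : ∀ s, s <+: body l → countO s ≤ countI s) :
    ∀ q, q <+: l.map Prod.fst → countO q ≤ countI q := by
  intro q hq
  obtain ⟨m, hm, rfl⟩ := prefix_fst_struct hq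
  have hb := hdom _ (prefix_body_of_prefix hm)
  have htm : ∀ p ∈ m, IsTsip p.2 := fun p hp => ht p (hm.subset hp)
  obtain ⟨e1, e2⟩ := sumc_bal htm
  simp only [countI_eq, countO_eq, count_body] at hb ⊢
  omega

lemma fst_dom_1 {l : List (Letter × List Letter)} (ht : ∀ p ∈ l, IsTsip p.2)
    (hdom : ∀ s, s <+: body l → s.count O1 ≤ s.count I1 ∧ s.count O2 ≤ s.count I2) :
    ∀ q, q <+: l.map Prod.fst → q.count O1 ≤ q.count I1 ∧ q.count O2 ≤ q.count I2 := by
  intro q hq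
  obtain ⟨m, hm, rfl⟩ := prefix_fst_struct hq
  have hb := hdom _ (prefix_body_of_prefix hm)
  have htm : ∀ p ∈ m, IsTsip p.2 := fun p hp => ht p (hm.subset hp)
  obtain ⟨e1, e2⟩ := sumc_bal htm
  simp only [count_body] at hb
  omega


lemma tsip_pref_dom {w wp : List Letter} (hw : IsTsip w) (hp : wp <+: w) :
    wp.count O1 ≤ wp.count I1 ∧ wp.count O2 ≤ wp.count I2 :=
  (isTsip_iff.mp hw).2.2 wp hp

lemma mem_of_split {l l₁ l₂ : List (Letter × List Letter)} {x : Letter} {w : List Letter}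
    (h : l = l₁ ++ (x, w) :: l₂) : (x, w) ∈ l := by subst h; simp

lemma body_isOpSeq {l : List (Letter × List Letter)} (ht : ∀ p ∈ l, IsTsip p.2)
    (hxs : IsOpSeq (l.map Prod.fst)) : IsOpSeq (body l) := by
  rw [isOpSeq_iff] at hxs ⊢
  obtain ⟨e1, e2⟩ := sumc_bal ht
  constructor
  · have := hxs.1
    simp only [countI_eq, countO_eq, count_body] at this ⊢
    omega
  · intro s hs
    rcases prefix_body hs with ⟨l₁, hl₁, rfl⟩ | ⟨l₁, x, w, l₂, wp, rfl, hwp, rfl⟩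
    · have hq := hxs.2 _ (hl₁.map Prod.fst)
      obtain ⟨f1, f2⟩ := sumc_bal (fun p hp => ht p (hl₁.subset hp))
      simp only [countI_eq, countO_eq, count_body] at hq ⊢
      omega
    · have hpre : l₁ ++ [(x, w)] <+: l₁ ++ (x, w) :: l₂ := ⟨l₂, by simp⟩
      have hq := hxs.2 _ (hpre.map Prod.fst)
      obtain ⟨f1, f2⟩ := sumc_bal (l := l₁) (fun p hp => ht p (by simp [hp]))
      have hwd := tsip_pref_dom (ht _ (mem_of_split rfl)) hwp
      simp only [countI_eq, countO_eq, count_body, sumc_append, sumc_cons, sumc_nil,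
        List.map_append, List.count_append, List.map_cons, List.map_nil] at hq f1 f2 ⊢
      omega

lemma body_irreducible {l : List (Letter × List Letter)}
    (ht : ∀ p ∈ l, IsTsip p.2) (hlast : ∀ l₀ x wl, l = l₀ ++ [(x, wl)] → wl = [])
    (hxs : IsOpSeq (l.map Prod.fst))
    (hirr : ∀ q, q <+: l.map Prod.fst → IsOpSeq q → q = [] ∨ q = l.map Prod.fst) :
    ∀ s, s <+: body l → IsOpSeq s → s = [] ∨ s = body l := by
  intro s hs hso
  rw [isOpSeq_iff] at hso
  rcases prefix_body hs with ⟨l₁, hl₁, rfl⟩ | ⟨l₁, x, w, l₂, wp, rfl, hwp, rfl⟩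
  · -- s = body l₁
    have htm : ∀ p ∈ l₁, IsTsip p.2 := fun p hp => ht p (hl₁.subset hp)
    obtain ⟨f1, f2⟩ := sumc_bal htm
    have hop : IsOpSeq (l₁.map Prod.fst) := by
      rw [isOpSeq_iff]
      constructor
      · have := hso.1
        simp only [countI_eq, countO_eq, count_body] at this ⊢
        omega
      · exact fst_dom_O htm hso.2
    rcases hirr _ (hl₁.map Prod.fst) hop with h | h
    · left
      rw [List.map_eq_nil_iff] at h
      simp [h]
    · right
      have : l₁ = l := hl₁.eq_of_length (by simpa using congrArg List.length h)
      rw [this]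
  · -- s = body (l₁ ++ [(x, wp)]), l = l₁ ++ (x, w) :: l₂
    rw [isOpSeq_iff] at hxs
    have hpre : l₁ ++ [(x, w)] <+: l₁ ++ (x, w) :: l₂ := ⟨l₂, by simp⟩
    have hq := hxs.2 _ (hpre.map Prod.fst)
    obtain ⟨f1, f2⟩ := sumc_bal (l := l₁) (fun p hp => ht p (by simp [hp]))
    have hwtsip : IsTsip w := ht _ (mem_of_split rfl)
    have hwd := tsip_pref_dom hwtsip hwp
    -- F := map fst l₁ ++ [x] is a balanced op seq
    have hbal : countI (l₁.map Prod.fst ++ [x]) = countO (l₁.map Prod.fst ++ [x]) ∧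
        countI wp = countO wp := by
      have h1 := hso.1
      simp only [countI_eq, countO_eq, count_body, sumc_append, sumc_cons, sumc_nil,
        List.map_append, List.count_append, List.map_cons, List.map_nil] at h1 hq ⊢
      omega
    have hFop : IsOpSeq ((l₁ ++ [(x, w)]).map Prod.fst) := by
      rw [isOpSeq_iff]
      refine ⟨by simpa using hbal.1, fun q hq2 => ?_⟩
      simp only [List.map_append, List.map_cons, List.map_nil] at hq2
      rcases prefix_snoc hq2 with h | h
      · refine fst_dom_O (l := l₁) (fun p hp => ht p (by simp [hp])) ?_ q h
        intro t htp
        refine hso.2 t (htp.trans ?_)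
        exact ⟨x :: wp, by simp⟩
      · subst h
        exact le_of_eq hbal.1.symm
    rcases hirr _ (hpre.map Prod.fst) hFop with h | h
    · exfalso
      simp at h
    · -- F = whole skeleton, so l₂ = [] and w = []
      have hlen := congrArg List.length h
      simp only [List.length_map, List.length_append, List.length_cons,
        List.length_nil] at hlen
      have hl₂ : l₂ = [] := List.length_eq_zero_iff.mp (by omega)
      subst hl₂
      have hw : w = [] := hlast l₁ x w rfl
      subst hw
      have hwp0 : wp = [] := List.prefix_nil.mp hwp
      subst hwp0
      right
      simp

lemma body_no_tsip_prefix {l : List (Letter × List Letter)} (ht : ∀ p ∈ l, IsTsip p.2)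
    (hskel : ∀ u, u <+: l.map Prod.fst → IsTsip u → u = []) :
    ∀ d, d <+: body l → IsTsip d → d = [] := by
  intro d hd hdt
  rw [isTsip_iff] at hdt
  obtain ⟨hb1, hb2, hdom⟩ := hdt
  rcases prefix_body hd with ⟨l₁, hl₁, rfl⟩ | ⟨l₁, x, w, l₂, wp, rfl, hwp, rfl⟩
  · have htm : ∀ p ∈ l₁, IsTsip p.2 := fun p hp => ht p (hl₁.subset hp)
    obtain ⟨f1, f2⟩ := sumc_bal htm
    have hq : IsTsip (l₁.map Prod.fst) := by
      rw [isTsip_iff]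
      refine ⟨?_, ?_, fst_dom_1 htm hdom⟩ <;>
        (simp only [count_body] at hb1 hb2; omega)
    have := hskel _ (hl₁.map Prod.fst) hq
    rw [List.map_eq_nil_iff] at this
    simp [this]
  · exfalso
    have hpre : l₁ ++ [(x, w)] <+: l₁ ++ (x, w) :: l₂ := ⟨l₂, by simp⟩
    obtain ⟨f1, f2⟩ := sumc_bal (l := l₁) (fun p hp => ht p (by simp [hp]))
    have hwd := tsip_pref_dom (ht _ (mem_of_split rfl)) hwp
    have hxpre : body l₁ ++ [x] <+: body (l₁ ++ [(x, wp)]) := by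
      simp only [body_append, body_cons, body_nil, List.append_nil]
      exact ⟨wp, by simp⟩
    have hx := hdom _ hxpre
    -- F := map fst l₁ ++ [x] is tsip
    have hbal : (l₁.map Prod.fst ++ [x]).count I1 = (l₁.map Prod.fst ++ [x]).count O1 ∧
        (l₁.map Prod.fst ++ [x]).count I2 = (l₁.map Prod.fst ++ [x]).count O2 := by
      simp only [count_body, sumc_append, sumc_cons, sumc_nil, List.map_append,
        List.count_append, List.map_cons, List.map_nil] at hb1 hb2 hx ⊢
      omega
    have hFt : IsTsip (l₁.map Prod.fst ++ [x]) := by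
      rw [isTsip_iff]
      refine ⟨hbal.1, hbal.2, fun q hq2 => ?_⟩
      rcases prefix_snoc hq2 with h | h
      · refine fst_dom_1 (l := l₁) (fun p hp => ht p (by simp [hp])) ?_ q h
        intro u hu
        refine hdom u (hu.trans ?_)
        simp only [body_append, body_cons, body_nil, List.append_nil]
        exact ⟨x :: wp, by simp⟩
      · subst h
        omega
    have := hskel _ (by simpa using hpre.map Prod.fst) hFt
    simp at this

lemma body_tsip {l : List (Letter × List Letter)} (ht : ∀ p ∈ l, IsTsip p.2)
    (hf : IsTsip (l.map Prod.fst)) : IsTsip (body l) := by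
  rw [isTsip_iff] at hf ⊢
  obtain ⟨e1, e2⟩ := sumc_bal ht
  obtain ⟨g1, g2, gdom⟩ := hf
  refine ⟨?_, ?_, ?_⟩
  · simp only [count_body]; omega
  · simp only [count_body]; omega
  · intro s hs
    rcases prefix_body hs with ⟨l₁, hl₁, rfl⟩ | ⟨l₁, x, w, l₂, wp, rfl, hwp, rfl⟩
    · have hq := gdom _ (hl₁.map Prod.fst)
      obtain ⟨f1, f2⟩ := sumc_bal (fun p hp => ht p (hl₁.subset hp))
      simp only [count_body] at hq ⊢
      omega
    · have hpre : l₁ ++ [(x, w)] <+: l₁ ++ (x, w) :: l₂ := ⟨l₂, by simp⟩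
      have hq := gdom _ (hpre.map Prod.fst)
      obtain ⟨f1, f2⟩ := sumc_bal (l := l₁) (fun p hp => ht p (by simp [hp]))
      have hwd := tsip_pref_dom (ht _ (mem_of_split rfl)) hwp
      simp only [count_body, sumc_append, sumc_cons, sumc_nil, List.map_append,
        List.count_append, List.map_cons, List.map_nil] at hq ⊢
      omega

lemma body_uniq : ∀ l l' : List (Letter × List Letter),
    (∀ p ∈ l, IsTsip p.2) → (∀ p ∈ l', IsTsip p.2) →
    (∀ u, u <:+: (l.map Prod.fst).drop 1 → IsTsip u → u = []) →
    (∀ u, u <:+: (l'.map Prod.fst).drop 1 → IsTsip u → u = []) →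
    body l = body l' → l = l' := by
  intro l
  induction l with
  | nil =>
    intro l' _ _ _ _ he
    exact (body_eq_nil he.symm).symm
  | cons p t ih =>
    obtain ⟨x, w⟩ := p
    intro l' ht ht' h h' he
    cases l' with
    | nil => exact absurd (body_eq_nil he) (by simp)
    | cons p' t' =>
      obtain ⟨x', w'⟩ := p'
      simp only [body_cons, List.cons.injEq] at he
      obtain ⟨rfl, he2⟩ := he
      -- show w = w'
      have hNTP : ∀ d, d <+: body t → IsTsip d → d = [] := by
        refine body_no_tsip_prefix (fun p hp => ht p (by simp [hp])) ?_
        intro u hu hut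
        exact h u (by simpa using hu.isInfix) hut
      have hNTP' : ∀ d, d <+: body t' → IsTsip d → d = [] := by
        refine body_no_tsip_prefix (fun p hp => ht' p (by simp [hp])) ?_
        intro u hu hut
        exact h' u (by simpa using hu.isInfix) hut
      have hww : w = w' := by
        have hwt : IsTsip w := ht (x, w) (by simp)
        have hwt' : IsTsip w' := ht' (x, w') (by simp)
        rcases le_total w.length w'.length with hl | hl
        · have hx1 : w <+: w ++ body t := List.prefix_append w (body t)
          have hx2 : w' <+: w ++ body t := by
            rw [he2]; exact List.prefix_append w' (body t')
          have hp1 : w <+: w' := List.prefix_of_prefix_length_le hx1 hx2 hl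
          obtain ⟨d, rfl⟩ := hp1
          have hdt : IsTsip d := tsip_right_quot hwt' hwt
          have hdp : d <+: body t := by
            rw [List.append_assoc] at he2
            have : body t = d ++ body t' := List.append_cancel_left he2
            exact ⟨body t', this.symm⟩
          have := hNTP d hdp hdt
          simp [this]
        · have hx1 : w <+: w ++ body t := List.prefix_append w (body t)
          have hx2 : w' <+: w ++ body t := by
            rw [he2]; exact List.prefix_append w' (body t')
          have hp1 : w' <+: w := List.prefix_of_prefix_length_le hx2 hx1 hl
          obtain ⟨d, rfl⟩ := hp1
          have hdt : IsTsip d := tsip_right_quot hwt hwt'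
          have hdp : d <+: body t' := by
            rw [List.append_assoc] at he2
            have : body t' = d ++ body t := (List.append_cancel_left he2).symm
            exact ⟨body t, this.symm⟩
          have := hNTP' d hdp hdt
          simp [this]
      subst hww
      have he3 : body t = body t' := List.append_cancel_left he2
      have htail : t = t' := by
        refine ih t' (fun p hp => ht p (by simp [hp])) (fun p hp => ht' p (by simp [hp]))
          ?_ ?_ he3
        · intro u hu hut
          refine h u ?_ hut
          simp only [List.map_cons, List.drop_one, List.tail_cons] at *
          exact hu.trans (List.tail_suffix _).isInfix
        · intro u hu hut
          refine h' u ?_ hut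
          simp only [List.map_cons, List.drop_one, List.tail_cons] at *
          exact hu.trans (List.tail_suffix _).isInfix
      rw [htail]

def tsipB (w : List Letter) : Bool :=
  (w.count I1 == w.count O1) && (w.count I2 == w.count O2) &&
    w.inits.all fun s => decide (s.count O1 ≤ s.count I1) && decide (s.count O2 ≤ s.count I2)

lemma tsipB_iff {w : List Letter} : tsipB w = true ↔ IsTsip w := by
  rw [isTsip_iff, tsipB]
  simp only [Bool.and_eq_true, beq_iff_eq, List.all_eq_true, decide_eq_true_eq]
  constructor
  · rintro ⟨⟨h1, h2⟩, h3⟩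
    exact ⟨h1, h2, fun s hs => h3 s ((List.mem_inits _ _).mpr hs)⟩
  · rintro ⟨h1, h2, h3⟩
    exact ⟨⟨h1, h2⟩, fun s hs => h3 s ((List.mem_inits _ _).mp hs)⟩

def maxT (t : List Letter) : ℕ :=
  Nat.findGreatest (fun m => tsipB (t.take m)) t.length

lemma maxT_le (t : List Letter) : maxT t ≤ t.length := Nat.findGreatest_le _

lemma maxT_tsip (t : List Letter) : IsTsip (t.take (maxT t)) := by
  rw [← tsipB_iff]
  exact Nat.findGreatest_spec (P := fun m => tsipB (t.take m)) (Nat.zero_le _)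
    (by show tsipB (t.take 0) = true; rw [List.take_zero, tsipB_iff]; exact tsip_nil)

lemma le_maxT {u t : List Letter} (hu : u <+: t) (ht : IsTsip u) : u.length ≤ maxT t := by
  refine Nat.le_findGreatest hu.length_le ?_
  rw [← List.prefix_iff_eq_take.mp hu, tsipB_iff]
  exact ht

def greedy : List Letter → List (Letter × List Letter)
  | [] => []
  | x :: t => (x, t.take (maxT t)) :: greedy (t.drop (maxT t))
termination_by l => l.length
decreasing_by simp

@[simp] lemma greedy_nil : greedy [] = [] := by rw [greedy]

lemma greedy_cons (x : Letter) (t : List Letter) :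
    greedy (x :: t) = (x, t.take (maxT t)) :: greedy (t.drop (maxT t)) := by rw [greedy]

lemma body_greedy (r : List Letter) : body (greedy r) = r := by
  induction r using greedy.induct with
  | case1 => simp
  | case2 x t ih => rw [greedy_cons, body_cons, ih, List.take_append_drop]

lemma greedy_tsip (r : List Letter) : ∀ p ∈ greedy r, IsTsip p.2 := by
  induction r using greedy.induct with
  | case1 => simp
  | case2 x t ih =>
    rw [greedy_cons]
    rintro p hp
    rcases List.mem_cons.mp hp with rfl | hp
    · exact maxT_tsip t
    · exact ih p hp

lemma greedy_max (r : List Letter) :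
    ∀ m₁ x w m₂, greedy r = m₁ ++ (x, w) :: m₂ →
      ∀ u, IsTsip u → u <+: w ++ body m₂ → u.length ≤ w.length := by
  induction r using greedy.induct with
  | case1 => intro m₁ x w m₂ h; simp at h
  | case2 y t ih =>
    intro m₁ x w m₂ h u hu hup
    rw [greedy_cons] at h
    cases m₁ with
    | nil =>
      simp only [List.nil_append, List.cons.injEq] at h
      have hw : t.take (maxT t) = w := congrArg Prod.snd h.1
      have hm2 : m₂ = greedy (t.drop (maxT t)) := h.2.symm
      have hbody : w ++ body m₂ = t := by
        rw [hm2, body_greedy, ← hw, List.take_append_drop]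
      rw [hbody] at hup
      have h1 := le_maxT hup hu
      have h2 := maxT_le t
      rw [← hw]
      simp only [List.length_take]
      omega
    | cons q m₁' =>
      simp only [List.cons_append, List.cons.injEq] at h
      exact ih m₁' x w m₂ h.2 u hu hup

lemma prefix_body_inj {m l : List (Letter × List Letter)} (h : m <+: l)
    (he : body m = body l) : m = l := by
  obtain ⟨r, rfl⟩ := h
  have : body r = [] := by
    have := congrArg List.length he
    simp only [body_append, List.length_append] at this
    exact List.eq_nil_of_length_eq_zero (by omega)
  rw [body_eq_nil this, List.append_nil]

section Irr

variable {p : List Letter} (hp : IsOpSeq p)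
  (hirr : ∀ s, s <+: p → IsOpSeq s → s = [] ∨ s = p)

include hp hirr in
lemma greedy_last : ∀ l₀ x w, greedy p = l₀ ++ [(x, w)] → w = [] := by
  intro l₀ x w h
  have hb : body (greedy p) = p := body_greedy p
  rw [h] at hb
  simp only [body_append, body_cons, body_nil, List.append_nil] at hb
  have hw : IsTsip w := greedy_tsip p (x, w) (by rw [h]; simp)
  have hwb : countI w = countO w := (tsip_opSeq hw).1
  have hsp : p = (body l₀ ++ [x]) ++ w := by rw [← hb]; simp
  have hs : (body l₀ ++ [x]) <+: p := ⟨w, hsp.symm⟩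
  have hsop : IsOpSeq (body l₀ ++ [x]) := by
    rw [isOpSeq_iff]
    constructor
    · have h1 := hp.1
      rw [hsp] at h1
      simp only [countI_eq, countO_eq, List.count_append] at h1 ⊢
      simp only [countI_eq, countO_eq] at hwb
      omega
    · intro s hss
      exact (isOpSeq_iff.mp hp).2 s (hss.trans hs)
  rcases hirr _ hs hsop with h0 | h0
  · simp at h0
  · have := congrArg List.length hsp
    rw [h0] at this
    simp only [List.length_append] at this
    exact List.eq_nil_of_length_eq_zero (by omega)

include hp in
lemma greedy_skel_opSeq : IsOpSeq ((greedy p).map Prod.fst) := by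
  have ht := greedy_tsip p
  have hb : body (greedy p) = p := body_greedy p
  obtain ⟨e1, e2⟩ := sumc_bal ht
  rw [isOpSeq_iff]
  constructor
  · have h1 := hp.1
    rw [← hb] at h1
    simp only [countI_eq, countO_eq, count_body] at h1 ⊢
    omega
  · refine fst_dom_O ht ?_
    rw [hb]
    exact (isOpSeq_iff.mp hp).2

include hp hirr in
lemma greedy_skel_irr : ∀ q, q <+: (greedy p).map Prod.fst → IsOpSeq q →
    q = [] ∨ q = (greedy p).map Prod.fst := by
  intro q hq hqop
  have ht := greedy_tsip p
  have hb : body (greedy p) = p := body_greedy p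
  obtain ⟨m, hm, rfl⟩ := prefix_fst_struct hq
  obtain ⟨f1, f2⟩ := sumc_bal (fun r hr => ht r (hm.subset hr))
  have hsop : IsOpSeq (body m) := by
    rw [isOpSeq_iff]
    constructor
    · have h1 := hqop.1
      simp only [countI_eq, countO_eq, count_body] at h1 ⊢
      omega
    · intro s hss
      exact (isOpSeq_iff.mp hp).2 s (by rw [← hb]; exact hss.trans (prefix_body_of_prefix hm))
  rcases hirr _ (by rw [← hb]; exact prefix_body_of_prefix hm) hsop with h0 | h0
  · left; rw [body_eq_nil h0]; simp
  · right
    rw [prefix_body_inj hm (by rw [hb, h0])]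

include hp hirr in
lemma greedy_skel_tsip : ∀ u, u <:+: (greedy p).map Prod.fst → IsTsip u →
    u = [] ∨ u = (greedy p).map Prod.fst := by
  intro u hu hut
  by_cases hu0 : u = []
  · exact Or.inl hu0
  have ht := greedy_tsip p
  have hb : body (greedy p) = p := body_greedy p
  set l := greedy p with hl
  obtain ⟨a, c, hsplit⟩ := hu
  -- split l into l₁ ++ l₂ ++ l₃
  set l₁ := l.take a.length with hl₁
  set l₂ := (l.drop a.length).take u.length with hl₂
  set l₃ := (l.drop a.length).drop u.length with hl₃
  have hlsplit : l = l₁ ++ (l₂ ++ l₃) := by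
    rw [hl₁, hl₂, hl₃, List.take_append_drop, List.take_append_drop]
  have hfst1 : l₁.map Prod.fst = a := by
    rw [hl₁, List.map_take, ← hsplit]
    simp [List.take_left]
  have hfst2 : l₂.map Prod.fst = u := by
    rw [hl₂, List.map_take, List.map_drop, ← hsplit, List.append_assoc,
      List.drop_left, List.take_left]
  have hl₂ne : l₂ ≠ [] := by
    intro h0
    rw [h0] at hfst2
    exact hu0 hfst2.symm
  have htb : IsTsip (body l₂) := by
    refine body_tsip (fun r hr => ht r ?_) (by rw [hfst2]; exact hut)
    rw [hlsplit]
    simp [hr]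
  rcases List.eq_nil_or_concat l₁ with h1 | ⟨l₁', q, hcat⟩
  · -- u is at the start: body l₂ is a tsip prefix of p
    have hpre : body l₂ <+: p := by
      rw [← hb, hlsplit, h1]
      simp only [List.nil_append, body_append]
      exact List.prefix_append _ _
    rcases hirr _ hpre (tsip_opSeq htb) with h0 | h0
    · exact absurd (body_eq_nil h0) hl₂ne
    · right
      have hl₃ : body l₃ = [] := by
        have hpe : p = body l₂ ++ body l₃ := by
          rw [← hb, hlsplit, h1]; simp
        have := congrArg List.length hpe
        rw [h0] at this
        simp only [List.length_append] at this
        exact List.eq_nil_of_length_eq_zero (by omega)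
      rw [hlsplit, h1, body_eq_nil hl₃]
      simp [← hfst2]
  · -- u is in the middle: contradicts greediness
    exfalso
    obtain ⟨x₀, w₀⟩ := q
    have hsplit2 : greedy p = l₁' ++ (x₀, w₀) :: (l₂ ++ l₃) := by
      rw [← hl, hlsplit, hcat]
      simp
    have hw₀ : IsTsip w₀ := ht (x₀, w₀) (by rw [hl, hsplit2]; simp)
    have hkey := greedy_max p l₁' x₀ w₀ (l₂ ++ l₃) hsplit2 (w₀ ++ body l₂)
      (tsip_append hw₀ htb) ⟨body l₃, by simp⟩
    have : body l₂ = [] := by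
      simp only [List.length_append] at hkey
      exact List.eq_nil_of_length_eq_zero (by omega)
    exact hl₂ne (body_eq_nil this)

end Irr

lemma countI_append (a b : List Letter) : countI (a ++ b) = countI a + countI b := by
  simp [countI, List.filter_append]

lemma countO_append (a b : List Letter) : countO (a ++ b) = countO a + countO b := by
  simp [countO, List.filter_append]

def opSeqB (w : List Letter) : Bool :=
  (countI w == countO w) && w.inits.all fun s => decide (countO s ≤ countI s)

lemma opSeqB_iff {w : List Letter} : opSeqB w = true ↔ IsOpSeq w := by
  rw [isOpSeq_iff, opSeqB]
  simp only [Bool.and_eq_true, beq_iff_eq, List.all_eq_true, decide_eq_true_eq]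
  constructor
  · rintro ⟨h1, h2⟩
    exact ⟨h1, fun s hs => h2 s ((List.mem_inits _ _).mpr hs)⟩
  · rintro ⟨h1, h2⟩
    exact ⟨h1, fun s hs => h2 s ((List.mem_inits _ _).mp hs)⟩

lemma zipWith_fst_snd {α β γ : Type} (l : List (α × β)) (f : α → β → γ) :
    List.zipWith f (l.map Prod.fst) (l.map Prod.snd) = l.map fun p => f p.1 p.2 := by
  induction l with
  | nil => rfl
  | cons a t ih => simp [ih]

lemma zipWith_eq_map_zip {α β γ : Type} (a : List α) (b : List β) (f : α → β → γ) :
    List.zipWith f a b = (a.zip b).map fun p => f p.1 p.2 := by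
  induction a generalizing b with
  | nil => rfl
  | cons x t ih =>
    cases b with
    | nil => rfl
    | cons y s => simp [ih]

end Dcmp

/-- Every non-empty operation sequence `w` admits a unique decomposition
`w = x₁w₁x₂w₂⋯x_{2m-1}w_{2m-1}x_{2m}v` with `x₁⋯x_{2m}` an unbreakable operation
sequence, each `wᵢ` a tsip word, and `v` an operation sequence. -/
theorem stmt_8 (w : List Letter) (hw : IsOpSeq w) (hne : w ≠ []) :
    ∃! d : List Letter × List (List Letter) × List Letter,
      IsDecomp w d.1 d.2.1 d.2.2 := by
  classical
  open Dcmp List in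
  -- the minimal non-empty op-seq prefix of w
  have hex : ∃ n, 0 < n ∧ n ≤ w.length ∧ opSeqB (w.take n) = true :=
    ⟨w.length, List.length_pos_iff.mpr hne, le_refl _,
      by rw [List.take_length]; exact opSeqB_iff.mpr hw⟩
  set n := Nat.find hex with hn
  obtain ⟨hn0, hnle, hnop⟩ := Nat.find_spec hex
  rw [opSeqB_iff] at hnop
  set p := w.take n with hpdef
  set v := w.drop n with hvdef
  have hwpv : w = p ++ v := (List.take_append_drop n w).symm
  have hplen : p.length = n := by rw [hpdef, List.length_take]; omega
  have hpne : p ≠ [] := by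
    intro h
    rw [h] at hplen
    simp at hplen
    omega
  have hp : IsOpSeq p := hnop
  have hpw : p <+: w := List.take_prefix n w
  have hirr : ∀ s, s <+: p → IsOpSeq s → s = [] ∨ s = p := by
    intro s hs hsop
    by_cases h0 : s = []
    · exact Or.inl h0
    right
    have hsw : s <+: w := hs.trans hpw
    have hsn : s = w.take s.length := List.prefix_iff_eq_take.mp hsw
    have hfind : n ≤ s.length :=
      Nat.find_min' hex ⟨List.length_pos_iff.mpr h0, hsw.length_le,
        by rw [← hsn]; exact opSeqB_iff.mpr hsop⟩
    have hsl : s.length ≤ n := by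
      have := hs.length_le
      omega
    have : s.length = n := le_antisymm hsl hfind
    rw [hsn, this]
  have hv : IsOpSeq v := by
    rw [isOpSeq_iff]
    constructor
    · have h1 := hw.1
      rw [hwpv, countI_append, countO_append] at h1
      have := hp.1
      omega
    · intro s hs
      obtain ⟨t, htv⟩ := hs
      have hps : p ++ s <+: w := ⟨t, by rw [List.append_assoc, htv, ← hwpv]⟩
      have := (isOpSeq_iff.mp hw).2 _ hps
      rw [countI_append, countO_append] at this
      have := hp.1
      omega
  have hmin : ∀ p' v', w = p' ++ v' → IsOpSeq p' → p' ≠ [] →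
      (∀ s, s <+: p' → IsOpSeq s → s = [] ∨ s = p') → p' = p ∧ v' = v := by
    intro p' v' he hop' hne' hirr'
    have hpw' : p' <+: w := ⟨v', he.symm⟩
    have hpp : p' = p := by
      rcases le_total p.length p'.length with hl | hl
      · have h1 : p <+: p' := List.prefix_of_prefix_length_le hpw hpw' hl
        rcases hirr' p h1 hp with h2 | h2
        · exact absurd h2 hpne
        · exact h2.symm
      · have h1 : p' <+: p := List.prefix_of_prefix_length_le hpw' hpw hl
        rcases hirr p' h1 hop' with h2 | h2
        · exact absurd h2 hne'
        · exact h2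
    refine ⟨hpp, ?_⟩
    rw [hpp] at he
    rw [hwpv] at he
    exact (List.append_cancel_left he).symm
  -- the greedy decomposition of p
  set l := greedy p with hldef
  have hbodyl : body l = p := body_greedy p
  have ht : ∀ q ∈ l, IsTsip q.2 := greedy_tsip p
  have hlne : l ≠ [] := by
    intro h
    rw [h] at hbodyl
    exact hpne hbodyl.symm
  obtain ⟨l₀, q, hcat⟩ := (List.eq_nil_or_concat l).resolve_left hlne
  obtain ⟨xl, wl⟩ := q
  rw [List.concat_eq_append] at hcat
  have hwl : wl = [] := greedy_last hp hirr l₀ xl wl (by rw [← hldef]; exact hcat)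
  set xs := l.map Prod.fst with hxsdef
  set ws := (l.map Prod.snd).dropLast with hwsdef
  have hsnd : l.map Prod.snd = ws ++ [[]] := by
    rw [hwsdef, hcat, hwl]
    simp
  have hxsne : xs ≠ [] := by
    rw [hxsdef]
    simp [hlne]
  have hxsop : IsOpSeq xs := greedy_skel_opSeq hp
  have hflat : (List.zipWith (fun x wi => x :: wi) xs (ws ++ [[]])).flatten = p := by
    rw [← hsnd, hxsdef, zipWith_fst_snd]
    exact hbodyl
  have hlenxs : xs.length = ws.length + 1 := by
    have h1 : xs.length = l.length := by rw [hxsdef]; simp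
    have h2 : (l.map Prod.snd).length = l.length := by simp
    rw [hsnd] at h2
    simp at h2
    omega
  have hunb : IsUnbreakable xs :=
    ⟨hxsop, hxsne, greedy_skel_tsip hp hirr, greedy_skel_irr hp hirr⟩
  have hwstsip : ∀ wi ∈ ws, IsTsip wi := by
    intro wi hwi
    have : wi ∈ l.map Prod.snd := (List.dropLast_prefix _).subset hwi
    obtain ⟨q, hq, rfl⟩ := List.mem_map.mp this
    exact ht q hq
  have hdec : IsDecomp w xs ws v := by
    refine ⟨⟨countI xs, ?_, ?_⟩, hlenxs, hunb, hwstsip, hv, by rw [hflat]; exact hwpv⟩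
    · by_contra h0
      have h1 : countI xs = 0 := by omega
      have h2 := length_eq xs
      have h3 := hxsop.1
      have : xs.length = 0 := by omega
      exact hxsne (List.eq_nil_of_length_eq_zero this)
    · have h2 := length_eq xs
      have h3 := hxsop.1
      omega
  -- uniqueness
  refine ⟨(xs, ws, v), hdec, ?_⟩
  rintro ⟨xs', ws', v'⟩ hd
  obtain ⟨hm', hlen', hunb', htsips', hv', heq⟩ := hd
  set l' := xs'.zip (ws' ++ [[]]) with hl'def
  have hlens : xs'.length = (ws' ++ [[]]).length := by simp [hlen']
  have hfst' : l'.map Prod.fst = xs' := List.map_fst_zip (le_of_eq hlens)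
  have hsnd' : l'.map Prod.snd = ws' ++ [[]] := List.map_snd_zip (le_of_eq hlens.symm)
  have hbody' : body l' = (List.zipWith (fun x wi => x :: wi) xs' (ws' ++ [[]])).flatten := by
    rw [zipWith_eq_map_zip]
    rfl
  have ht' : ∀ q ∈ l', IsTsip q.2 := by
    intro q hq
    have : q.2 ∈ l'.map Prod.snd := List.mem_map_of_mem (f := Prod.snd) hq
    rw [hsnd'] at this
    rcases List.mem_append.mp this with h | h
    · exact htsips' _ h
    · simp at h
      rw [h]
      exact tsip_nil
  have hlast' : ∀ l₀ x wl, l' = l₀ ++ [(x, wl)] → wl = [] := by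
    intro l₀ x wl h
    have h1 := congrArg (List.map Prod.snd) h
    rw [hsnd'] at h1
    simp only [List.map_append, List.map_cons, List.map_nil] at h1
    have h2 := congrArg List.getLast? h1
    rw [List.getLast?_concat, List.getLast?_concat] at h2
    exact (Option.some_injective _ h2).symm
  have hxs'ne : xs' ≠ [] := hunb'.2.1
  have hl'ne : l' ≠ [] := by
    intro h
    rw [h] at hfst'
    exact hxs'ne hfst'.symm
  have hxs'op : IsOpSeq (l'.map Prod.fst) := by rw [hfst']; exact hunb'.1
  have hop' : IsOpSeq (body l') := body_isOpSeq ht' hxs'op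
  have hirr' : ∀ s, s <+: body l' → IsOpSeq s → s = [] ∨ s = body l' :=
    body_irreducible ht' hlast' hxs'op (by rw [hfst']; exact hunb'.2.2.2)
  have hne'' : body l' ≠ [] := body_ne_nil hl'ne
  have hpv' : w = body l' ++ v' := by rw [heq, hbody']
  obtain ⟨hpeq, hveq⟩ := hmin (body l') v' hpv' hop' hne'' hirr'
  -- now body l' = body l, apply uniqueness of the inner decomposition
  have hcond : ∀ u, u <:+: (l.map Prod.fst).drop 1 → IsTsip u → u = [] := by
    intro u hu hut
    have hinf : u <:+: l.map Prod.fst := hu.trans (List.drop_suffix 1 _).isInfix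
    rcases greedy_skel_tsip hp hirr u hinf hut with h | h
    · exact h
    · exfalso
      have h1 := hu.length_le
      have h2 : 1 ≤ l.length := List.length_pos_iff.mpr hlne
      rw [h] at h1
      simp only [List.length_drop, List.length_map] at h1
      have h4 : l.length = (greedy p).length := by rw [hldef]
      omega
  have hcond' : ∀ u, u <:+: (l'.map Prod.fst).drop 1 → IsTsip u → u = [] := by
    intro u hu hut
    have hinf : u <:+: l'.map Prod.fst := hu.trans (List.drop_suffix 1 _).isInfix
    rcases hunb'.2.2.1 u (by rwa [hfst'] at hinf) hut with h | h
    · exact h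
    · exfalso
      have h1 := hu.length_le
      have h2 : 1 ≤ l'.length := List.length_pos_iff.mpr hl'ne
      rw [hfst'] at h1
      rw [h] at h1
      simp only [List.length_drop, List.length_map] at h1
      have h3 : xs'.length = l'.length := by rw [← hfst', List.length_map]
      omega
  have hll : l = l' :=
    body_uniq l l' ht ht' hcond hcond' (by rw [hbodyl, hpeq])
  have hxs : xs' = xs := by rw [hxsdef, hll, hfst']
  have hws : ws' = ws := by
    have h1 : ws ++ [[]] = ws' ++ [[]] := by rw [← hsnd, hll, hsnd']
    have h2 := congrArg List.dropLast h1
    rw [List.dropLast_concat, List.dropLast_concat] at h2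
    exact h2.symm
  simp only [Prod.mk.injEq]
  exact ⟨hxs, hws, hveq⟩
end

section
/- In the decomposition w = x₁w₁⋯x_{2m-1}w_{2m-1}x_{2m}v of a non-empty operation sequence (with x₁⋯x_{2m} unbreakable, each wᵢ a tsip word, v an operation sequence), every tsip sub-word of w that is not a prefix of w is contained entirely within one of the words wᵢ or within v. -/
open Letter

section Stmt9Aux

open List

/-- Balance of `I1` against `O1`. -/
def bal1 (z : List Letter) : ℤ := (z.count I1 : ℤ) - z.count O1

/-- Balance of `I2` against `O2`. -/
def bal2 (z : List Letter) : ℤ := (z.count I2 : ℤ) - z.count O2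

/-- Total input/output balance. -/
def balD (z : List Letter) : ℤ := (countI z : ℤ) - countO z

lemma bal1_append (a b : List Letter) : bal1 (a ++ b) = bal1 a + bal1 b := by
  simp [bal1, List.count_append]; ring

lemma bal2_append (a b : List Letter) : bal2 (a ++ b) = bal2 a + bal2 b := by
  simp [bal2, List.count_append]; ring

lemma countI_eq (z : List Letter) : countI z = z.count I1 + z.count I2 := by
  induction z with
  | nil => rfl
  | cons x t ih =>
    cases x <;> simp [countI, List.filter_cons, List.count_cons, Letter.isI] at * <;> omega

lemma countO_eq (z : List Letter) : countO z = z.count O1 + z.count O2 := by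
  induction z with
  | nil => rfl
  | cons x t ih =>
    cases x <;> simp [countO, List.filter_cons, List.count_cons, Letter.isI] at * <;> omega

lemma balD_eq (z : List Letter) : balD z = bal1 z + bal2 z := by
  simp only [balD, bal1, bal2, countI_eq, countO_eq]; push_cast; ring

lemma balD_append (a b : List Letter) : balD (a ++ b) = balD a + balD b := by
  simp only [balD_eq, bal1_append, bal2_append]; ring

lemma tsip_iff (z : List Letter) :
    IsTsip z ↔ bal1 z = 0 ∧ bal2 z = 0 ∧ ∀ p, p <+: z → 0 ≤ bal1 p ∧ 0 ≤ bal2 p := by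
  constructor
  · rintro ⟨h1, h2, h3⟩
    refine ⟨by simp [bal1, h1], by simp [bal2, h2], fun p hp => ?_⟩
    have hpt := List.prefix_iff_eq_take.mp hp
    obtain ⟨hA, hB⟩ := h3 p.length
    rw [← hpt] at hA hB
    constructor <;> simp only [bal1, bal2] <;> omega
  · rintro ⟨h1, h2, h3⟩
    simp only [bal1, bal2, sub_eq_zero] at h1 h2
    refine ⟨by exact_mod_cast h1, by exact_mod_cast h2, fun m => ?_⟩
    obtain ⟨hA, hB⟩ := h3 (z.take m) (List.take_prefix m z)
    simp only [bal1, bal2, sub_nonneg] at hA hB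
    exact ⟨by exact_mod_cast hA, by exact_mod_cast hB⟩

lemma opseq_iff (z : List Letter) :
    IsOpSeq z ↔ balD z = 0 ∧ ∀ p, p <+: z → 0 ≤ balD p := by
  constructor
  · rintro ⟨h1, h2⟩
    refine ⟨by simp [balD, h1], fun p hp => ?_⟩
    have hpt := List.prefix_iff_eq_take.mp hp
    have hA := h2 p.length
    rw [← hpt] at hA
    simp only [balD, sub_nonneg]
    exact_mod_cast hA
  · rintro ⟨h1, h2⟩
    simp only [balD, sub_eq_zero] at h1
    refine ⟨by exact_mod_cast h1, fun m => ?_⟩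
    have hA := h2 (z.take m) (List.take_prefix m z)
    simp only [balD, sub_nonneg] at hA
    exact_mod_cast hA

lemma tsip_nil : IsTsip ([] : List Letter) := by
  refine ⟨rfl, rfl, fun m => by simp⟩

lemma prefix_append_cases {p a c : List Letter} (h : p <+: a ++ c) :
    p <+: a ∨ ∃ c', c' <+: c ∧ p = a ++ c' := by
  rcases le_or_gt p.length a.length with hle | hlt
  · exact Or.inl (List.prefix_of_prefix_length_le h (a.prefix_append c) hle)
  · right
    have ha : a <+: p := List.prefix_of_prefix_length_le (a.prefix_append c) h hlt.le
    obtain ⟨c', rfl⟩ := ha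
    obtain ⟨r, hr⟩ := h
    refine ⟨c', ⟨r, ?_⟩, rfl⟩
    rw [List.append_assoc] at hr
    exact List.append_cancel_left hr

lemma del_tsip {a b c : List Letter} (h : IsTsip (a ++ b ++ c)) (hb : IsTsip b) :
    IsTsip (a ++ c) := by
  rw [tsip_iff] at h hb ⊢
  obtain ⟨h1, h2, h3⟩ := h
  obtain ⟨hb1, hb2, -⟩ := hb
  rw [bal1_append, bal1_append] at h1
  rw [bal2_append, bal2_append] at h2
  refine ⟨by rw [bal1_append]; linarith, by rw [bal2_append]; linarith, fun p hp => ?_⟩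
  rcases prefix_append_cases hp with hpa | ⟨c', hc', rfl⟩
  · refine h3 p (hpa.trans ?_)
    rw [List.append_assoc]
    exact a.prefix_append _
  · have hpre : a ++ b ++ c' <+: a ++ b ++ c := by
      rw [List.append_assoc, List.append_assoc]
      exact (List.prefix_append_right_inj a).mpr ((List.prefix_append_right_inj b).mpr hc')
    obtain ⟨hA, hB⟩ := h3 _ hpre
    rw [bal1_append, bal1_append] at hA
    rw [bal2_append, bal2_append] at hB
    rw [bal1_append, bal2_append]
    constructor <;> linarith

lemma bal_suffix_nonpos {t s : List Letter} (ht : IsTsip t) (hs : s <:+ t) :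
    bal1 s ≤ 0 ∧ bal2 s ≤ 0 := by
  obtain ⟨r, rfl⟩ := hs
  rw [tsip_iff] at ht
  obtain ⟨h1, h2, h3⟩ := ht
  obtain ⟨hA, hB⟩ := h3 r (r.prefix_append s)
  rw [bal1_append] at h1
  rw [bal2_append] at h2
  constructor <;> linarith

lemma mem_zipCons {c : List Letter} :
    ∀ {xs : List Letter} {ws : List (List Letter)},
      c ∈ List.zipWith (fun x wi => x :: wi) xs ws → ∃ y t, t ∈ ws ∧ c = y :: t := by
  intro xs
  induction xs with
  | nil => intro ws h; simp at h
  | cons x xs ih =>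
    intro ws h
    cases ws with
    | nil => simp at h
    | cons t ws =>
      simp only [List.zipWith_cons_cons, List.mem_cons] at h
      rcases h with rfl | h
      · exact ⟨x, t, List.mem_cons_self, rfl⟩
      · obtain ⟨y, t', ht', rfl⟩ := ih h
        exact ⟨y, t', List.mem_cons_of_mem _ ht', rfl⟩

/-- Deleting the interior tsip words from a spanning tsip word. -/
lemma del_main :
    ∀ (Y : List Letter) (W : List (List Letter)), Y.length = W.length →
      (∀ ω ∈ W, IsTsip ω) → ∀ (v s z : List Letter), z ≠ [] →
      z <+: (List.zipWith (fun x t => x :: t) Y W).flatten ++ v → IsTsip (s ++ z) →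
      ∃ q p, q <+: Y ∧ (Y ≠ [] → q ≠ []) ∧ IsTsip (s ++ q ++ p) ∧
        ((∃ ω, IsTsip ω ∧ p <+: ω) ∨ (q = Y ∧ p <+: v)) := by
  intro Y
  induction Y with
  | nil =>
    intro W hlen hW v s z hz hp hts
    have hW0 : W = [] := List.length_eq_zero_iff.mp hlen.symm
    subst hW0
    simp only [List.zipWith_nil_right, List.flatten_nil, List.nil_append] at hp
    exact ⟨[], z, List.prefix_rfl, fun h => absurd rfl h, by simpa using hts,
      Or.inr ⟨rfl, hp⟩⟩
  | cons y Y' ih =>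
    intro W hlen hW v s z hz hp hts
    cases W with
    | nil => simp at hlen
    | cons om W' =>
      simp only [List.zipWith_cons_cons, List.flatten_cons] at hp
      rw [List.cons_append, List.cons_append, List.append_assoc] at hp
      cases z with
      | nil => exact absurd rfl hz
      | cons z0 z1 =>
        rw [List.cons_prefix_cons] at hp
        obtain ⟨rfl, hp1⟩ := hp
        rcases prefix_append_cases hp1 with hin | ⟨z2, hz2, rfl⟩
        · refine ⟨[z0], z1, ⟨Y', rfl⟩, fun _ => by simp, ?_, Or.inl ⟨om, hW om (List.mem_cons_self), hin⟩⟩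
          simpa using hts
        · have hts' : IsTsip ((s ++ [z0]) ++ z2) := by
            have hmid : IsTsip ((s ++ [z0]) ++ om ++ z2) := by
              have he : s ++ z0 :: (om ++ z2) = (s ++ [z0]) ++ om ++ z2 := by simp
              rw [← he]; exact hts
            exact del_tsip hmid (hW om (List.mem_cons_self))
          by_cases hz2e : z2 = []
          · subst hz2e
            refine ⟨[z0], [], ⟨Y', rfl⟩, fun _ => by simp, ?_,
              Or.inl ⟨om, hW om (List.mem_cons_self), List.nil_prefix⟩⟩
            simpa using hts'
          · obtain ⟨q', p, hq', hq'ne, hts3, hdisj⟩ :=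
              ih W' (by simpa using hlen) (fun w hw => hW w (List.mem_cons_of_mem _ hw))
                v (s ++ [z0]) z2 hz2e hz2 hts'
            refine ⟨z0 :: q', p, ?_, fun _ => by simp, ?_, ?_⟩
            · rw [← List.singleton_append]
              exact (List.cons_prefix_cons).mpr ⟨rfl, hq'⟩
            · have he : s ++ (z0 :: q') ++ p = (s ++ [z0]) ++ q' ++ p := by simp
              rw [he]; exact hts3
            · rcases hdisj with h | ⟨rfl, hpv⟩
              · exact Or.inl h
              · exact Or.inr ⟨rfl, hpv⟩

/-- Positional analysis of an infix of `L.flatten ++ v`. -/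
lemma pos (v u b : List Letter) :
    ∀ (L : List (List Letter)) (a : List Letter), L.flatten ++ v = a ++ u ++ b →
    u <:+: v ∨ (∃ c ∈ L, u <:+: c.tail) ∨
    (∃ L₁ L₂, L = L₁ ++ L₂ ∧ L₂ ≠ [] ∧ a = L₁.flatten ∧ u <+: L₂.flatten ++ v) ∨
    (∃ L₁ c L₂ s z, L = L₁ ++ c :: L₂ ∧ u = s ++ z ∧ s ≠ [] ∧ z ≠ [] ∧
      s <:+ c.tail ∧ z <+: L₂.flatten ++ v) := by
  intro L
  induction L with
  | nil =>
    intro a h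
    simp only [List.flatten_nil, List.nil_append] at h
    exact Or.inl ⟨a, b, h.symm⟩
  | cons c L' ih =>
    intro a h
    rw [List.flatten_cons, List.append_assoc] at h
    rcases le_or_gt c.length a.length with hle | hlt
    · have hc : c <+: a :=
        List.prefix_of_prefix_length_le (c.prefix_append _)
          ⟨u ++ b, by rw [← List.append_assoc]; exact h.symm⟩ hle
      obtain ⟨a', rfl⟩ := hc
      have h' : L'.flatten ++ v = a' ++ u ++ b := by
        rw [List.append_assoc, List.append_assoc] at h
        have := List.append_cancel_left h
        rw [← List.append_assoc] at this
        exact this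
      rcases ih a' h' with h1 | ⟨c', hc', hu⟩ | ⟨L₁, L₂, rfl, h2, h3, h4⟩ |
          ⟨L₁, c', L₂, s, z, rfl, h2, h3, h4, h5, h6⟩
      · exact Or.inl h1
      · exact Or.inr (Or.inl ⟨c', List.mem_cons_of_mem _ hc', hu⟩)
      · exact Or.inr (Or.inr (Or.inl ⟨c :: L₁, L₂, rfl, h2, by simp [h3], h4⟩))
      · exact Or.inr (Or.inr (Or.inr ⟨c :: L₁, c', L₂, s, z, rfl, h2, h3, h4, h5, h6⟩))
    · have ha : a <+: c :=
        List.prefix_of_prefix_length_le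
          ⟨u ++ b, by rw [← List.append_assoc]; exact h.symm⟩
          (c.prefix_append _) hlt.le
      obtain ⟨r, rfl⟩ := ha
      have hrne : r ≠ [] := by
        intro hr; rw [hr] at hlt; simp at hlt
      have h'' : r ++ (L'.flatten ++ v) = u ++ b := by
        rw [List.append_assoc, List.append_assoc] at h
        exact List.append_cancel_left h
      by_cases hae : a = []
      · subst hae
        refine Or.inr (Or.inr (Or.inl ⟨[], r :: L', rfl, by simp, rfl, ⟨b, ?_⟩⟩))
        rw [List.flatten_cons, List.append_assoc]
        exact h''.symm
      · obtain ⟨x, a2, rfl⟩ := List.exists_cons_of_ne_nil hae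
        rcases le_or_gt u.length r.length with hur | hur
        · have hu : u <+: r :=
            List.prefix_of_prefix_length_le ⟨b, h''.symm⟩ (r.prefix_append _) hur
          obtain ⟨r2, rfl⟩ := hu
          refine Or.inr (Or.inl ⟨(x :: a2) ++ (u ++ r2), List.mem_cons_self, ⟨a2, r2, ?_⟩⟩)
          simp
        · have hr : r <+: u :=
            List.prefix_of_prefix_length_le (r.prefix_append _) ⟨b, h''.symm⟩ hur.le
          obtain ⟨z, rfl⟩ := hr
          have hzne : z ≠ [] := by
            intro hzz; rw [hzz] at hur; simp at hur
          have h3 : L'.flatten ++ v = z ++ b := by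
            rw [List.append_assoc] at h''
            exact List.append_cancel_left h''
          refine Or.inr (Or.inr (Or.inr ⟨[], (x :: a2) ++ r, L', r, z, rfl, rfl, hrne, hzne,
            ⟨a2, by simp⟩, ⟨b, h3.symm⟩⟩))

lemma core_tsip (xs : List Letter) (hunb : IsUnbreakable xs) (k : ℕ) (hk : 1 ≤ k)
    (t s q p om : List Letter) (ht : IsTsip t) (hst : s <:+ t)
    (hq : q <+: xs.drop k) (hqne : q ≠ [])
    (h : IsTsip (s ++ q ++ p)) (hom : IsTsip om) (hp : p <+: om) : False := by
  obtain ⟨hsle1, hsle2⟩ := bal_suffix_nonpos ht hst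
  rw [tsip_iff] at h
  obtain ⟨h1, h2, h3⟩ := h
  obtain ⟨hsge1, hsge2⟩ := h3 s (by rw [List.append_assoc]; exact s.prefix_append _)
  obtain ⟨hsq1, hsq2⟩ := h3 (s ++ q) ((s ++ q).prefix_append p)
  rw [bal1_append] at hsq1
  rw [bal2_append] at hsq2
  obtain ⟨hp1, hp2⟩ := ((tsip_iff om).mp hom).2.2 p hp
  rw [bal1_append, bal1_append] at h1
  rw [bal2_append, bal2_append] at h2
  have hqt : IsTsip q := by
    rw [tsip_iff]
    refine ⟨by linarith, by linarith, fun q' hq' => ?_⟩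
    have hpre : s ++ q' <+: s ++ q ++ p := by
      refine List.IsPrefix.trans ?_ ((s ++ q).prefix_append p)
      exact (List.prefix_append_right_inj s).mpr hq'
    obtain ⟨hA, hB⟩ := h3 _ hpre
    rw [bal1_append] at hA
    rw [bal2_append] at hB
    constructor <;> linarith
  have hinf : q <:+: xs := hq.isInfix.trans (List.drop_suffix k xs).isInfix
  rcases hunb.2.2.1 q hinf hqt with h1 | h1
  · exact hqne h1
  · have hlq := hq.length_le
    rw [h1, List.length_drop] at hlq
    have hxs : xs.length ≠ 0 := fun h0 => hunb.2.1 (List.length_eq_zero_iff.mp h0)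
    omega

lemma core_v (xs : List Letter) (hunb : IsUnbreakable xs) (k : ℕ) (hk1 : 1 ≤ k)
    (hk2 : k < xs.length) (t s p : List Letter) (ht : IsTsip t) (hst : s <:+ t)
    (h : IsTsip (s ++ xs.drop k ++ p)) : False := by
  obtain ⟨hsle1, hsle2⟩ := bal_suffix_nonpos ht hst
  rw [tsip_iff] at h
  obtain ⟨-, -, h3⟩ := h
  obtain ⟨hsge1, hsge2⟩ := h3 s (by rw [List.append_assoc]; exact s.prefix_append _)
  obtain ⟨hsq1, hsq2⟩ := h3 (s ++ xs.drop k) ((s ++ xs.drop k).prefix_append p)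
  rw [bal1_append] at hsq1
  rw [bal2_append] at hsq2
  have hdropD : 0 ≤ balD (xs.drop k) := by
    rw [balD_eq]; linarith
  have hxsD : balD xs = 0 := ((opseq_iff xs).mp hunb.1).1
  have hsplit : balD (xs.take k) + balD (xs.drop k) = 0 := by
    rw [← balD_append, List.take_append_drop]; exact hxsD
  have htk0 : 0 ≤ balD (xs.take k) := ((opseq_iff xs).mp hunb.1).2 _ (List.take_prefix k xs)
  have htkeq : balD (xs.take k) = 0 := by linarith
  have hops : IsOpSeq (xs.take k) := by
    rw [opseq_iff]
    refine ⟨htkeq, fun p' hp' => ?_⟩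
    exact ((opseq_iff xs).mp hunb.1).2 p' (hp'.trans (List.take_prefix k xs))
  rcases hunb.2.2.2 (xs.take k) (List.take_prefix k xs) hops with he | he
  · have hlen0 := congrArg List.length he
    rw [List.length_take] at hlen0
    simp only [List.length_nil] at hlen0
    omega
  · have := congrArg List.length he
    rw [List.length_take] at this
    omega

end Stmt9Aux


/-- In the decomposition `w = x₁w₁⋯x_{2m-1}w_{2m-1}x_{2m}v` of a non-empty operation
sequence, every tsip sub-word of `w` that is not a prefix of `w` is contained entirely
within one of the words `wᵢ` or within `v`. -/
theorem stmt_9 (w : List Letter) (xs : List Letter) (ws : List (List Letter))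
    (v : List Letter) (hd : IsDecomp w xs ws v)
    (u : List Letter) (hinf : u <:+: w) (htsip : IsTsip u) (hpre : ¬ u <+: w) :
    (∃ wi ∈ ws, u <:+: wi) ∨ u <:+: v := by
  classical
  obtain ⟨⟨m, hm, hxm⟩, hlen, hunb, hws, hv, hw⟩ := hd
  obtain ⟨a, b, hab⟩ := hinf
  set B := List.zipWith (fun x wi => x :: wi) xs (ws ++ [[]]) with hB
  have key : B.flatten ++ v = a ++ u ++ b := by rw [← hw]; exact hab.symm
  have hune : u ≠ [] := by
    intro h; exact hpre (h ▸ List.nil_prefix)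
  have hane : a ≠ [] := by
    rintro rfl; exact hpre ⟨b, by simpa using hab⟩
  have hlws : (ws ++ [[]]).length = xs.length := by simp [hlen]
  have htsips : ∀ t ∈ ws ++ [[]], IsTsip t := by
    intro t ht
    rcases List.mem_append.mp ht with h | h
    · exact hws t h
    · rw [List.mem_singleton] at h; rw [h]; exact tsip_nil
  have hBlen : B.length = xs.length := by
    rw [hB, List.length_zipWith, hlws, min_self]
  rcases pos v u b B a key with hcase | ⟨c, hc, hcu⟩ | ⟨L₁, L₂, hsplit, hL₂, haf, hu⟩ |
      ⟨L₁, c, L₂, s, z, hsplit, huz, hsne, hzne, hstail, hzpre⟩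
  · exact Or.inr hcase
  · obtain ⟨y, t, htmem, rfl⟩ := mem_zipCons (hB ▸ hc)
    rcases List.mem_append.mp htmem with h | h
    · exact Or.inl ⟨t, h, hcu⟩
    · rw [List.mem_singleton] at h
      rw [h] at hcu
      simp only [List.tail_cons, List.infix_nil] at hcu
      exact absurd hcu hune
  · -- spanning case starting at a block head
    exfalso
    have hL₁ : L₁ ≠ [] := by
      rintro rfl; exact hane (by simpa using haf)
    set k := L₁.length with hk
    have hk1 : 1 ≤ k := List.length_pos_iff.mpr hL₁
    have hkB : k + L₂.length = B.length := by
      rw [hsplit]; simp [hk]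
    have hkxs : k < xs.length := by
      have : L₂.length ≠ 0 := fun h0 => hL₂ (List.length_eq_zero_iff.mp h0)
      omega
    have hL₂eq : L₂ = List.zipWith (fun x t => x :: t) (xs.drop k) ((ws ++ [[]]).drop k) := by
      have h1 : B.drop k = L₂ := by rw [hsplit]; exact (List.drop_left : (L₁ ++ L₂).drop L₁.length = L₂)
      rw [← h1, hB, List.drop_zipWith]
    have hYne : xs.drop k ≠ [] := by
      intro h0
      rw [List.drop_eq_nil_iff] at h0
      omega
    obtain ⟨q, p, hqpre, hqne', hts2, hdisj⟩ :=
      del_main (xs.drop k) ((ws ++ [[]]).drop k) (by simp [hlws])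
        (fun t ht => htsips t (List.mem_of_mem_drop ht)) v [] u hune
        (by rw [← hL₂eq]; exact hu) (by simpa using htsip)
    have hqne : q ≠ [] := hqne' hYne
    rcases hdisj with ⟨om, hom, hpom⟩ | ⟨hqY, hpv⟩
    · exact core_tsip xs hunb k hk1 [] [] q p om tsip_nil List.suffix_rfl hqpre hqne hts2 hom hpom
    · exact core_v xs hunb k hk1 hkxs [] [] p tsip_nil List.suffix_rfl (hqY ▸ hts2)
  · -- spanning case starting inside a block tail
    exfalso
    set n := L₁.length with hn
    have hdropB : List.zipWith (fun x t => x :: t) (xs.drop n) ((ws ++ [[]]).drop n)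
        = c :: L₂ := by
      rw [← List.drop_zipWith, ← hB, hsplit, hn]
      exact (List.drop_left : (L₁ ++ c :: L₂).drop L₁.length = c :: L₂)
    rcases hxd : xs.drop n with _ | ⟨y, Y'⟩
    · rw [hxd] at hdropB; simp at hdropB
    rcases hwd : (ws ++ [[]]).drop n with _ | ⟨t, W'⟩
    · rw [hwd] at hdropB; simp at hdropB
    rw [hxd, hwd, List.zipWith_cons_cons] at hdropB
    injection hdropB with hc_eq hL₂eq
    have htmem : t ∈ ws ++ [[]] := List.mem_of_mem_drop (hwd ▸ (List.mem_cons_self : t ∈ t :: W'))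
    have htt : IsTsip t := htsips t htmem
    have hst : s <:+ t := by
      rw [← hc_eq] at hstail
      simpa using hstail
    by_cases hY' : Y' = []
    · -- then `c` is the last block, its tail is `[]`, contradicting `s ≠ []`
      have hlend : xs.length - n = 1 := by
        have := congrArg List.length hxd
        rw [List.length_drop, hY'] at this
        simpa using this
      have hnws : n = ws.length := by omega
      have hwd2 : (ws ++ [[]]).drop n = [[]] := by
        rw [hnws]; exact (List.drop_left : (ws ++ [[]]).drop ws.length = [[]])
      rw [hwd] at hwd2
      injection hwd2 with ht0 hW0
      rw [ht0, List.suffix_nil] at hst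
      exact hsne hst
    · have hY'eq : Y' = xs.drop (n + 1) := by
        have : List.drop 1 (xs.drop n) = xs.drop (n + 1) := by
          rw [List.drop_drop]
        rw [hxd] at this
        simpa using this
      have hW'eq : W' = (ws ++ [[]]).drop (n + 1) := by
        have : List.drop 1 ((ws ++ [[]]).drop n) = (ws ++ [[]]).drop (n + 1) := by
          rw [List.drop_drop]
        rw [hwd] at this
        simpa using this
      have hk2 : n + 1 < xs.length := by
        have hne : xs.drop (n + 1) ≠ [] := hY'eq ▸ hY'
        by_contra hcon
        push_neg at hcon
        exact hne (List.drop_eq_nil_iff.mpr hcon)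
      obtain ⟨q, p, hqpre, hqne', hts2, hdisj⟩ :=
        del_main Y' W'
          (by rw [hY'eq, hW'eq]; simp [hlws])
          (by intro w' hw'; rw [hW'eq] at hw'; exact htsips w' (List.mem_of_mem_drop hw'))
          v s z hzne (hL₂eq ▸ hzpre) (huz ▸ htsip)
      have hqne : q ≠ [] := hqne' hY'
      rcases hdisj with ⟨om, hom, hpom⟩ | ⟨hqY, hpv⟩
      · exact core_tsip xs hunb (n + 1) (by omega) t s q p om htt hst
          (hY'eq ▸ hqpre) hqne hts2 hom hpom
      · have : IsTsip (s ++ xs.drop (n + 1) ++ p) := by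
          rw [← hY'eq, ← hqY]; exact hts2
        exact core_v xs hunb (n + 1) (by omega) hk2 t s p htt hst this
end
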